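/- Let Γ be a quiver of mutation type A_n with vertex set Γ₀. Then there exists a bijective labelling ℓ : Γ₀ → {1, …, n} such that: (i) every vertex is the vertex of smallest label of at most one oriented 3-cycle of Γ; and (ii) the set {β_1, …, β_n} ⊆ Φ defined by β_i = α_i + α_{i+1} + ⋯ + α_j whenever i is the smallest label and j the second-smallest label of the three vertices of an oriented 3-cycle of Γ, and β_i = α_i otherwise, is a companion basis for Γ (the element β_{ℓ(x)} being associated to the vertex x). -/

import Mathlib

open scoped BigOperators

/-- Fomin–Zelevinsky mutation of a skew-symmetric integer matrix (quiver) at a vertex `k`. -/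
def mutQ {V : Type*} [DecidableEq V] (B : V → V → ℤ) (k : V) : V → V → ℤ :=
  fun x y => if x = k ∨ y = k then -B x y
    else B x y + Int.sign (B x k) * max (B x k * B k y) 0

/-- Iterated mutation along a list of vertices (first entry mutated first). -/
def mutSeq {V : Type*} [DecidableEq V] (B : V → V → ℤ) (l : List V) : V → V → ℤ :=
  l.foldl mutQ B

/-- `O` is (the exchange matrix of) an orientation of the Dynkin diagram `A_n`,
with vertices `0, …, n-1` (0-based) along the path. -/
def IsOrientationA {n : ℕ} (O : Fin n → Fin n → ℤ) : Prop :=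
  (∀ x y, O y x = -O x y) ∧
  ∀ x y : Fin n, (O x y).natAbs = if x.val + 1 = y.val ∨ y.val + 1 = x.val then 1 else 0

/-- The quiver (skew-symmetric matrix) `B` is of mutation type `A_n`: it is obtained
from some orientation of the Dynkin diagram `A_n` by a finite sequence of mutations. -/
def IsMutTypeA {V : Type*} [DecidableEq V] (n : ℕ) (B : V → V → ℤ) : Prop :=
  ∃ (e : V ≃ Fin n) (O : Fin n → Fin n → ℤ) (l : List (Fin n)),
    IsOrientationA O ∧ ∀ x y, B x y = mutSeq O l (e x) (e y)

/-- The standard inner product. -/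
def ip {m : ℕ} (x y : Fin m → ℝ) : ℝ := ∑ k, x k * y k

/-- `eVec m i` is the `i`-th standard basis vector of `ℝ^m` (1-based: `1 ≤ i ≤ m`). -/
def eVec (m : ℕ) (i : ℕ) : Fin m → ℝ := fun k => if k.val + 1 = i then 1 else 0

/-- The root system of type `A_n`, realized in `ℝ^{n+1}` as `{e_i - e_j : i ≠ j}`. -/
def PhiA (n : ℕ) : Set (Fin (n + 1) → ℝ) :=
  {v | ∃ i j : ℕ, 1 ≤ i ∧ i ≤ n + 1 ∧ 1 ≤ j ∧ j ≤ n + 1 ∧ i ≠ j ∧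
        v = eVec (n + 1) i - eVec (n + 1) j}

/-- The simple root `α_i = e_i − e_{i+1}` of type `A_n` (1-based: `1 ≤ i ≤ n`). -/
def alA (n : ℕ) (i : ℕ) : Fin (n + 1) → ℝ := eVec (n + 1) i - eVec (n + 1) (i + 1)

/-- A companion basis for the quiver `B` with respect to the type `A_n` root system:
a family of roots forming a ℤ-basis of the root lattice `ℤΦ` whose pairwise inner
products match, in absolute value, the edge multiplicities of the quiver. -/
def IsCompanionBasisA {V : Type*} (n : ℕ) (B : V → V → ℤ)
    (γ : V → (Fin (n + 1) → ℝ)) : Prop :=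
  (∀ x, γ x ∈ PhiA n) ∧ LinearIndependent ℤ γ ∧
  Submodule.span ℤ (Set.range γ) = Submodule.span ℤ (PhiA n) ∧
  ∀ x y, x ≠ y → |ip (γ x) (γ y)| = ((B x y).natAbs : ℝ)

/-- The valency of a vertex: the number of edges at it in the underlying graph. -/
def valency {V : Type*} [Fintype V] (B : V → V → ℤ) (x : V) : ℕ := ∑ y, (B x y).natAbs

/-- `x, y, z` form an oriented 3-cycle `x → y → z → x` of the quiver `B`. -/
def Cyc3 {V : Type*} (B : V → V → ℤ) (x y z : V) : Prop :=
  0 < B x y ∧ 0 < B y z ∧ 0 < B z x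

/-- An end vertex: a vertex of valency 0, of valency 1, or of valency 2 lying on an
oriented 3-cycle. -/
def IsEndVertex {V : Type*} [Fintype V] (B : V → V → ℤ) (x : V) : Prop :=
  valency B x = 0 ∨ valency B x = 1 ∨ (valency B x = 2 ∧ ∃ y z, Cyc3 B x y z)

namespace CBAux
open Finset

variable {V : Type*} [Fintype V] [DecidableEq V] {n : ℕ}

noncomputable def gvec (n : ℕ) (u v : Fin (n+1)) : Fin (n+1) → ℝ :=
  fun t => (if t = u then (1:ℝ) else 0) - (if t = v then (1:ℝ) else 0)

lemma gvec_eq (u v : Fin (n+1)) :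
    gvec n u v = eVec (n+1) (u.val+1) - eVec (n+1) (v.val+1) := by
  funext t
  have h1 : (t.val + 1 = u.val + 1) ↔ t = u := by rw [Fin.ext_iff]; omega
  have h2 : (t.val + 1 = v.val + 1) ↔ t = v := by rw [Fin.ext_iff]; omega
  simp only [gvec, eVec, Pi.sub_apply, h1, h2]

def Touch (a b : V → Fin (n+1)) (x : V) (v : Fin (n+1)) : Prop := a x = v ∨ b x = v

def Shares (a b : V → Fin (n+1)) (x y : V) : Prop :=
  ∃ v, Touch a b x v ∧ Touch a b y v

lemma shares_comm {a b : V → Fin (n+1)} {x y : V} (h : Shares a b x y) : Shares a b y x := by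
  obtain ⟨v, h1, h2⟩ := h; exact ⟨v, h2, h1⟩

lemma cyc3_rot {B : V → V → ℤ} {x y z : V} (h : Cyc3 B x y z) : Cyc3 B y z x :=
  ⟨h.2.1, h.2.2, h.1⟩

lemma sum_support_three {M : Type*} [AddCommGroup M] [Module ℤ M]
    (γ : V → M) {x y z : V} (hxy : x ≠ y) (hxz : x ≠ z) (hyz : y ≠ z)
    (g : V → ℤ) (hg : ∀ t, t ≠ x → t ≠ y → t ≠ z → g t = 0) :
    ∑ t, g t • γ t = g x • γ x + g y • γ y + g z • γ z := by
  classical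
  have hsub : ({x, y, z} : Finset V) ⊆ Finset.univ := Finset.subset_univ _
  have := Finset.sum_subset hsub (f := fun t => g t • γ t) ?_
  · rw [← this, Finset.sum_insert (by simp [hxy, hxz]),
      Finset.sum_insert (by simp [hyz]), Finset.sum_singleton]
    abel
  · intro t _ ht
    simp only [Finset.mem_insert, Finset.mem_singleton, not_or] at ht
    rw [hg t ht.1 ht.2.1 ht.2.2, zero_smul]

lemma sum_support_two {M : Type*} [AddCommGroup M] [Module ℤ M]
    (γ : V → M) {x y : V} (hxy : x ≠ y)
    (g : V → ℤ) (hg : ∀ t, t ≠ x → t ≠ y → g t = 0) :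
    ∑ t, g t • γ t = g x • γ x + g y • γ y := by
  classical
  have hsub : ({x, y} : Finset V) ⊆ Finset.univ := Finset.subset_univ _
  have := Finset.sum_subset hsub (f := fun t => g t • γ t) ?_
  · rw [← this, Finset.sum_insert (by simp [hxy]), Finset.sum_singleton]
  · intro t _ ht
    simp only [Finset.mem_insert, Finset.mem_singleton, not_or] at ht
    rw [hg t ht.1 ht.2, zero_smul]

lemma not_indep_two {γ : V → (Fin (n+1) → ℝ)} (h : LinearIndependent ℤ γ)
    {x y : V} (hxy : x ≠ y) {c : ℤ}
    (hsum : γ x + c • γ y = 0) : False := by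
  classical
  have hli := Fintype.linearIndependent_iff.mp h
  have h0 := hli (fun t => if t = x then 1 else if t = y then c else 0) ?_ x
  · simp at h0
  · rw [sum_support_two γ hxy _ (fun t ht1 ht2 => by simp [ht1, ht2])]
    simpa [hxy, Ne.symm hxy] using hsum

lemma not_indep_three {γ : V → (Fin (n+1) → ℝ)} (h : LinearIndependent ℤ γ)
    {x y z : V} (hxy : x ≠ y) (hxz : x ≠ z) (hyz : y ≠ z)
    {cx cy cz : ℤ} (hcx : cx ≠ 0)
    (hsum : cx • γ x + cy • γ y + cz • γ z = 0) : False := by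
  classical
  have hli := Fintype.linearIndependent_iff.mp h
  have h0 := hli (fun t => if t = x then cx else if t = y then cy else if t = z then cz else 0) ?_ x
  · simp at h0; exact hcx h0
  · rw [sum_support_three γ hxy hxz hyz _ (fun t ht1 ht2 ht3 => by simp [ht1, ht2, ht3])]
    simpa [hxy, hxz, hyz, Ne.symm hxy, Ne.symm hxz, Ne.symm hyz] using hsum

lemma touch_pair {a b : V → Fin (n+1)} {x : V} {p q : Fin (n+1)}
    (hab : a x ≠ b x) (hpq : p ≠ q)
    (hp : Touch a b x p) (hq : Touch a b x q) :
    (a x = p ∧ b x = q) ∨ (a x = q ∧ b x = p) := by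
  rcases hp with h1 | h1 <;> rcases hq with h2 | h2
  · exact absurd (h1.symm.trans h2) hpq
  · exact Or.inl ⟨h1, h2⟩
  · exact Or.inr ⟨h2, h1⟩
  · exact absurd (h1.symm.trans h2) hpq

lemma gvec_swap (u v : Fin (n+1)) : gvec n v u = - gvec n u v := by
  funext t; simp [gvec]

lemma sign_gvec_pair {a b : V → Fin (n+1)} {x : V} {p q : Fin (n+1)}
    (h : (a x = p ∧ b x = q) ∨ (a x = q ∧ b x = p)) :
    ∃ ε : ℤ, ε ≠ 0 ∧ ε • gvec n (a x) (b x) = gvec n p q := by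
  rcases h with ⟨h1, h2⟩ | ⟨h1, h2⟩
  · exact ⟨1, one_ne_zero, by rw [h1, h2, one_smul]⟩
  · refine ⟨-1, by norm_num, ?_⟩
    rw [h1, h2, show gvec n q p = - gvec n p q from gvec_swap p q]
    simp

lemma pairs_ne {a b : V → Fin (n+1)}
    (h2 : LinearIndependent ℤ (fun x => gvec n (a x) (b x)))
    {x y : V} (hxy : x ≠ y) :
    ¬((a x = a y ∧ b x = b y) ∨ (a x = b y ∧ b x = a y)) := by
  rintro (⟨u1, u2⟩ | ⟨u1, u2⟩)
  · refine not_indep_two h2 hxy (c := -1) ?_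
    show gvec n (a x) (b x) + (-1 : ℤ) • gvec n (a y) (b y) = 0
    rw [u1, u2]; simp
  · refine not_indep_two h2 hxy (c := 1) ?_
    show gvec n (a x) (b x) + (1 : ℤ) • gvec n (a y) (b y) = 0
    rw [u1, u2, gvec_swap]; simp

lemma common_vertex {a b : V → Fin (n+1)} (hab : ∀ x, a x ≠ b x)
    (h2 : LinearIndependent ℤ (fun x => gvec n (a x) (b x)))
    {x y z : V} (hxy : x ≠ y) (hxz : x ≠ z) (hyz : y ≠ z)
    (sxy : Shares a b x y) (syz : Shares a b y z) (szx : Shares a b z x) :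
    ∃ v, Touch a b x v ∧ Touch a b y v ∧ Touch a b z v := by
  obtain ⟨u, hu1, hu2⟩ := sxy
  obtain ⟨v, hv1, hv2⟩ := syz
  obtain ⟨w, hw1, hw2⟩ := szx
  by_cases huv : u = v
  · exact ⟨u, hu1, hu2, huv ▸ hv2⟩
  by_cases hvw : v = w
  · exact ⟨v, hvw ▸ hw2, hv1, hv2⟩
  by_cases huw : u = w
  · exact ⟨u, hu1, hu2, huw ▸ hw1⟩
  -- x touches u and w, y touches u and v, z touches v and w : a 3-cycle, contradiction
  exfalso
  obtain ⟨εx, hεx, hgx⟩ := sign_gvec_pair (n := n) (touch_pair (hab x) (Ne.symm huw) hw2 hu1)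
  obtain ⟨εy, hεy, hgy⟩ := sign_gvec_pair (n := n) (touch_pair (hab y) huv hu2 hv1)
  obtain ⟨εz, hεz, hgz⟩ := sign_gvec_pair (n := n) (touch_pair (hab z) hvw hv2 hw1)
  refine not_indep_three h2 hxy hxz hyz (cy := εy) (cz := εz) hεx ?_
  show εx • gvec n (a x) (b x) + εy • gvec n (a y) (b y) + εz • gvec n (a z) (b z) = 0
  rw [hgx, hgy, hgz]; funext t
  simp only [gvec, Pi.add_apply, Pi.zero_apply]
  ring

lemma card_four {x y z e : V} (hxy : x ≠ y) (hxz : x ≠ z) (hxe : x ≠ e)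
    (hyz : y ≠ z) (hye : y ≠ e) (hze : z ≠ e) :
    ({x, y, z, e} : Finset V).card = 4 := by
  rw [Finset.card_insert_of_notMem (by simp [hxy, hxz, hxe]),
    Finset.card_insert_of_notMem (by simp [hyz, hye]),
    Finset.card_insert_of_notMem (by simp [hze]), Finset.card_singleton]

lemma mutQ_ne {B : V → V → ℤ} {k x y : V} (hx : x ≠ k) (hy : y ≠ k) :
    mutQ B k x y = B x y + Int.sign (B x k) * max (B x k * B k y) 0 := by
  simp [mutQ, hx, hy]

lemma mutQ_left {B : V → V → ℤ} {k y : V} : mutQ B k k y = -B k y := by simp [mutQ]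

lemma mutQ_right {B : V → V → ℤ} {k x : V} : mutQ B k x k = -B x k := by simp [mutQ]

lemma sign_max_eq {s t : ℤ} : Int.sign t * max (s * t) 0 = Int.sign s * max (s * t) 0 := by
  rcases lt_trichotomy (s * t) 0 with h | h | h
  · rw [max_eq_right h.le]; ring
  · rw [h]; simp
  · rcases mul_pos_iff.mp h with ⟨hs, ht⟩ | ⟨hs, ht⟩
    · rw [Int.sign_eq_one_of_pos hs, Int.sign_eq_one_of_pos ht]
    · rw [Int.sign_eq_neg_one_of_neg hs, Int.sign_eq_neg_one_of_neg ht]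

lemma mutQ_skew {B : V → V → ℤ} (h4 : ∀ x y, B y x = -B x y) (k : V) :
    ∀ x y, mutQ B k y x = - mutQ B k x y := by
  intro x y
  by_cases h : x = k ∨ y = k
  · have h' : y = k ∨ x = k := h.symm
    rw [show mutQ B k y x = -B y x from by simp [mutQ, h'],
      show mutQ B k x y = -B x y from by simp [mutQ, h], h4]
  · push_neg at h
    obtain ⟨hx, hy⟩ := h
    rw [mutQ_ne hy hx, mutQ_ne hx hy, h4 x y, h4 x k, h4 k y]
    have e1 : -B k y * -B x k = B x k * B k y := by ring
    rw [e1]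
    have e2 : Int.sign (-B k y) * max (B x k * B k y) 0
        = - (Int.sign (B x k) * max (B x k * B k y) 0) := by
      rw [Int.sign_neg, neg_mul]
      congr 1
      exact sign_max_eq (s := B x k) (t := B k y)
    rw [e2]; ring



lemma card_le_two_classes {V : Type*} [DecidableEq V] {s : Finset V} {P Q : V → Prop}
    (hcl : ∀ x ∈ s, P x ∨ Q x)
    (hP : ∀ x ∈ s, ∀ y ∈ s, P x → P y → x = y)
    (hQ : ∀ x ∈ s, ∀ y ∈ s, Q x → Q y → x = y) : s.card ≤ 2 := by
  classical
  have hsub : s ⊆ s.filter P ∪ s.filter Q := by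
    intro x hx
    rcases hcl x hx with h | h
    · exact Finset.mem_union_left _ (Finset.mem_filter.mpr ⟨hx, h⟩)
    · exact Finset.mem_union_right _ (Finset.mem_filter.mpr ⟨hx, h⟩)
  calc s.card ≤ (s.filter P ∪ s.filter Q).card := Finset.card_le_card hsub
    _ ≤ (s.filter P).card + (s.filter Q).card := Finset.card_union_le _ _
    _ ≤ 1 + 1 := add_le_add
        (Finset.card_le_one.mpr (fun x hx y hy =>
          hP x (Finset.mem_filter.mp hx).1 y (Finset.mem_filter.mp hy).1
            (Finset.mem_filter.mp hx).2 (Finset.mem_filter.mp hy).2))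
        (Finset.card_le_one.mpr (fun x hx y hy =>
          hQ x (Finset.mem_filter.mp hx).1 y (Finset.mem_filter.mp hy).1
            (Finset.mem_filter.mp hx).2 (Finset.mem_filter.mp hy).2))

lemma card_le_three_classes {V : Type*} [DecidableEq V] {s : Finset V} {P Q : V → Prop} {k : V}
    (hcl : ∀ x ∈ s, x = k ∨ P x ∨ Q x)
    (hP : ∀ x ∈ s, ∀ y ∈ s, P x → P y → x = y)
    (hQ : ∀ x ∈ s, ∀ y ∈ s, Q x → Q y → x = y) : s.card ≤ 3 := by
  classical
  have hsub : s ⊆ insert k (s.filter P ∪ s.filter Q) := by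
    intro x hx
    rcases hcl x hx with h | h | h
    · exact Finset.mem_insert.mpr (Or.inl h)
    · exact Finset.mem_insert.mpr (Or.inr (Finset.mem_union_left _ (Finset.mem_filter.mpr ⟨hx, h⟩)))
    · exact Finset.mem_insert.mpr (Or.inr (Finset.mem_union_right _ (Finset.mem_filter.mpr ⟨hx, h⟩)))
  calc s.card ≤ (insert k (s.filter P ∪ s.filter Q)).card := Finset.card_le_card hsub
    _ ≤ (s.filter P ∪ s.filter Q).card + 1 := Finset.card_insert_le _ _
    _ ≤ ((s.filter P).card + (s.filter Q).card) + 1 := by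
        exact add_le_add_left (Finset.card_union_le _ _) 1
    _ ≤ (1 + 1) + 1 := by
        refine add_le_add_left (add_le_add ?_ ?_) 1 <;>
        · refine Finset.card_le_one.mpr (fun x hx y hy => ?_)
          first
          | exact hP x (Finset.mem_filter.mp hx).1 y (Finset.mem_filter.mp hy).1
              (Finset.mem_filter.mp hx).2 (Finset.mem_filter.mp hy).2
          | exact hQ x (Finset.mem_filter.mp hx).1 y (Finset.mem_filter.mp hy).1
              (Finset.mem_filter.mp hx).2 (Finset.mem_filter.mp hy).2

lemma triang_indep {V : Type*} [Fintype V] [DecidableEq V] {N : ℕ} (c p : V → ℕ)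
    (hcp : ∀ x, c x < p x) (hpn : ∀ x, p x ≤ N) (hc : Function.Injective c) :
    LinearIndependent ℤ (fun x => eVec (N+1) (c x + 1) - eVec (N+1) (p x + 1)) := by
  rw [Fintype.linearIndependent_iff]
  intro g hg
  suffices H : ∀ m, ∀ x, c x = m → g x = 0 from fun x => H (c x) x rfl
  intro m
  induction m using Nat.strong_induction_on with
  | _ m IH =>
    intro x hx
    have hm : m < N + 1 := by have h1 := hcp x; have h2 := hpn x; omega
    have hev := congrFun hg ⟨m, hm⟩
    rw [Finset.sum_apply] at hev
    simp only [Pi.zero_apply] at hev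
    have hterm : ∀ i : V, (g i • (eVec (N+1) (c i + 1) - eVec (N+1) (p i + 1))) ⟨m, hm⟩
        = ((if c i = m then (g i : ℝ) else 0) - (if p i = m then (g i : ℝ) else 0)) := by
      intro i
      have e1 : ((⟨m, hm⟩ : Fin (N+1)).val + 1 = c i + 1) ↔ (c i = m) := by
        simp only [Fin.val_mk]; omega
      have e2 : ((⟨m, hm⟩ : Fin (N+1)).val + 1 = p i + 1) ↔ (p i = m) := by
        simp only [Fin.val_mk]; omega
      simp only [Pi.smul_apply, Pi.sub_apply, eVec, smul_eq_mul, e1, e2]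
      rcases eq_or_ne (c i) m with h1 | h1 <;> rcases eq_or_ne (p i) m with h2 | h2 <;>
        simp [h1, h2]
    rw [Finset.sum_congr rfl (fun i _ => hterm i)] at hev
    have hev2 := hev
    rw [Finset.sum_sub_distrib] at hev2
    have hA : ∑ i : V, (if c i = m then (g i : ℝ) else 0) = (g x : ℝ) := by
      rw [Finset.sum_eq_single x]
      · rw [if_pos hx]
      · intro i _ hi
        rw [if_neg (fun h => hi (hc (h.trans hx.symm)))]
      · intro h; exact absurd (Finset.mem_univ x) h
    have hB : ∑ i : V, (if p i = m then (g i : ℝ) else 0) = 0 := by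
      apply Finset.sum_eq_zero
      intro i _
      rcases eq_or_ne (p i) m with h2 | h2
      · rw [if_pos h2]
        have : g i = 0 := IH (c i) (by have := hcp i; omega) i rfl
        rw [this]; norm_num
      · rw [if_neg h2]
    rw [hA, hB] at hev2
    exact_mod_cast (by linarith : (g x : ℝ) = 0)

lemma elem_indep {V : Type*} [Fintype V] [DecidableEq V]
    {n : ℕ} {γ : V → (Fin (n+1) → ℝ)}
    (h : LinearIndependent ℤ γ) (k : V) (c : V → ℤ) (hck : c k = 0) :
    LinearIndependent ℤ (fun x => γ x + c x • γ k) := by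
  classical
  rw [Fintype.linearIndependent_iff] at h ⊢
  intro g hg
  have key : ∑ x, (g x + (if x = k then (∑ t, g t * c t) else 0)) • γ x = 0 := by
    have e1 : ∀ x, (g x + (if x = k then (∑ t, g t * c t) else 0)) • γ x
        = g x • γ x + (if x = k then (∑ t, g t * c t) • γ x else 0) := by
      intro x; rw [add_smul]; congr 1; split <;> simp
    rw [Finset.sum_congr rfl (fun x _ => e1 x), Finset.sum_add_distrib,
      Finset.sum_ite_eq' Finset.univ k (fun x => (∑ t, g t * c t) • γ x)]
    simp only [Finset.mem_univ, if_true]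
    have e2 : ∑ x, g x • (γ x + c x • γ k) = (∑ x, g x • γ x) + (∑ t, g t * c t) • γ k := by
      rw [Finset.sum_smul, ← Finset.sum_add_distrib]
      apply Finset.sum_congr rfl
      intro x _
      rw [smul_add, smul_smul]
    rw [← e2]; exact hg
  have h0 := h _ key
  have hz : ∀ t, t ≠ k → g t = 0 := by
    intro t ht; have := h0 t; simpa [ht] using this
  intro x
  by_cases hx : x = k
  · have hs : ∑ t, g t * c t = g k * c k := by
      apply Finset.sum_eq_single k (fun t _ ht => by rw [hz t ht, zero_mul])
      intro h'; exact absurd (Finset.mem_univ k) h'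
    have h0k := h0 k
    rw [if_pos rfl, hs, hck, mul_zero, add_zero] at h0k
    rw [hx]; exact h0k
  · exact hz x hx

lemma tele (n : ℕ) : ∀ i j : ℕ, i ≤ j →
    (∑ t ∈ Finset.Ico i j, alA n t) = eVec (n+1) i - eVec (n+1) j := by
  intro i j h
  induction j, h using Nat.le_induction with
  | base => simp
  | succ j hij IH =>
    rw [Finset.sum_Ico_succ_top (by omega), IH]
    funext t
    simp only [alA, eVec, Pi.add_apply, Pi.sub_apply]
    ring

lemma ip_eVec {M : ℕ} {i j : ℕ} (hi1 : 1 ≤ i) (hi2 : i ≤ M) :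
    ip (eVec M i) (eVec M j) = if i = j then 1 else 0 := by
  unfold ip
  rw [Finset.sum_eq_single (⟨i - 1, by omega⟩ : Fin M)]
  · have e1 : (⟨i - 1, by omega⟩ : Fin M).val + 1 = i := by
      simp only [Fin.val_mk]; omega
    have ev1 : eVec M i ⟨i - 1, by omega⟩ = 1 := by simp [eVec, e1]
    rw [ev1, one_mul]
    simp only [eVec, e1]
  · intro b _ hb
    have : b.val + 1 ≠ i := by
      intro h
      exact hb (by apply Fin.ext; simp only [Fin.val_mk]; omega)
    rw [show eVec M i b = 0 from by simp [eVec, this], zero_mul]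
  · intro h; exact absurd (Finset.mem_univ _) h

lemma ip_sub_sub {M : ℕ} (f g h k : Fin M → ℝ) :
    ip (f - g) (h - k) = ip f h - ip f k - (ip g h - ip g k) := by
  unfold ip
  have e : ∀ t, (f - g) t * (h - k) t = f t * h t - f t * k t - (g t * h t - g t * k t) := by
    intro t; simp only [Pi.sub_apply]; ring
  rw [Finset.sum_congr rfl (fun t _ => e t), Finset.sum_sub_distrib,
    Finset.sum_sub_distrib, Finset.sum_sub_distrib]

def Inv (n : ℕ) {V : Type*} [Fintype V] [DecidableEq V] (B : V → V → ℤ) : Prop :=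
  ∃ a b : V → Fin (n+1),
    (∀ x, a x ≠ b x) ∧
    LinearIndependent ℤ (fun x => gvec n (a x) (b x)) ∧
    (∀ x y : V, x ≠ y → ((Shares a b x y → (B x y).natAbs = 1) ∧ (¬ Shares a b x y → B x y = 0))) ∧
    (∀ x y, B y x = - B x y) ∧
    (∀ S : Finset (Fin (n+1)), S.Nonempty → S ≠ Finset.univ → ∃ x, ¬((a x ∈ S) ↔ (b x ∈ S))) ∧
    (∀ (v : Fin (n+1)) (s : Finset V), (∀ x ∈ s, Touch a b x v) → s.card ≤ 3) ∧
    (∀ x y z, x ≠ y → x ≠ z → y ≠ z → ∀ v, Touch a b x v → Touch a b y v → Touch a b z v →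
      Cyc3 B x y z ∨ Cyc3 B x z y)

lemma inv_base {n : ℕ} (O : Fin n → Fin n → ℤ) (hO : IsOrientationA O) : Inv n O := by
  obtain ⟨hskew, hadj⟩ := hO
  have hiff : ∀ x y : Fin n, x ≠ y →
      (Shares (fun i => i.castSucc) (fun i => i.succ) x y ↔ (x.val + 1 = y.val ∨ y.val + 1 = x.val)) := by
    intro x y hxy
    constructor
    · rintro ⟨v, (h1 | h1), (h2 | h2)⟩
      · exact absurd (Fin.ext (by
          have e1 : x.val = v.val := by rw [← h1]; rfl
          have e2 : y.val = v.val := by rw [← h2]; rfl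
          omega)) hxy
      · right
        have e1 : x.val = v.val := by rw [← h1]; rfl
        have e2 : y.val + 1 = v.val := by rw [← h2]; rfl
        omega
      · left
        have e1 : x.val + 1 = v.val := by rw [← h1]; rfl
        have e2 : y.val = v.val := by rw [← h2]; rfl
        omega
      · exact absurd (Fin.ext (by
          have e1 : x.val + 1 = v.val := by rw [← h1]; rfl
          have e2 : y.val + 1 = v.val := by rw [← h2]; rfl
          omega)) hxy
    · rintro (h | h)
      · refine ⟨x.succ, Or.inr rfl, Or.inl (Fin.ext ?_)⟩
        show y.val = x.val + 1
        omega
      · refine ⟨y.succ, Or.inl (Fin.ext ?_), Or.inr rfl⟩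
        show x.val = y.val + 1
        omega
  refine ⟨fun i => i.castSucc, fun i => i.succ, ?_, ?_, ?_, hskew, ?_, ?_, ?_⟩
  · intro x
    intro h
    have h' : (x.castSucc : Fin (n+1)).val = (x.succ : Fin (n+1)).val := congrArg Fin.val h
    simp only [Fin.coe_castSucc, Fin.val_succ] at h'
    omega
  · have e : (fun i : Fin n => gvec n i.castSucc i.succ)
        = fun i : Fin n => eVec (n+1) (i.val + 1) - eVec (n+1) ((i.val + 1) + 1) := by
      funext i
      rw [gvec_eq]
      rfl
    rw [e]
    exact triang_indep (fun i : Fin n => i.val) (fun i => i.val + 1)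
      (fun i => Nat.lt_succ_self _) (fun i => i.isLt) (fun i j h => Fin.ext h)
  · intro x y hxy
    constructor
    · intro hs
      rw [hadj x y, if_pos ((hiff x y hxy).mp hs)]
    · intro hs
      have := hadj x y
      rw [if_neg (fun hc => hs ((hiff x y hxy).mpr hc))] at this
      exact Int.natAbs_eq_zero.mp this
  · intro S hS1 hS2
    by_contra hcon
    push_neg at hcon
    have step : ∀ m (hm : m < n + 1), ((⟨m, hm⟩ : Fin (n+1)) ∈ S) ↔ ((⟨0, Nat.succ_pos n⟩ : Fin (n+1)) ∈ S) := by
      intro m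
      induction m with
      | zero => intro hm; rfl
      | succ m IH =>
        intro hm
        have hm' : m < n := by omega
        have h1 := hcon ⟨m, hm'⟩
        have e1 : ((⟨m, hm'⟩ : Fin n).castSucc : Fin (n+1)) = ⟨m, by omega⟩ := rfl
        have e2 : ((⟨m, hm'⟩ : Fin n).succ : Fin (n+1)) = ⟨m+1, hm⟩ := rfl
        rw [e1, e2] at h1
        exact h1.symm.trans (IH (by omega))
    obtain ⟨s0, hs0⟩ := hS1
    apply hS2
    apply Finset.eq_univ_iff_forall.mpr
    intro v
    have h1 := step v.val v.isLt
    have h2 := step s0.val s0.isLt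
    rw [Fin.eta] at h1
    rw [Fin.eta] at h2
    exact h1.mpr (h2.mp hs0)
  · intro v s hs
    have : s.card ≤ 2 := by
      refine card_le_two_classes (P := fun x : Fin n => x.val = v.val)
        (Q := fun x : Fin n => x.val + 1 = v.val) ?_ ?_ ?_
      · intro x hx
        rcases hs x hx with h | h
        · left; rw [← h]; rfl
        · right; rw [← h]; rfl
      · intro x _ y _ h1 h2; exact Fin.ext (h1.trans h2.symm)
      · intro x _ y _ h1 h2; exact Fin.ext (by omega)
    omega
  · intro x y z hxy hxz hyz v tx ty tz
    exfalso
    have ex : x.val = v.val ∨ x.val + 1 = v.val := by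
      rcases tx with h | h
      · left; rw [← h]; rfl
      · right; rw [← h]; rfl
    have ey : y.val = v.val ∨ y.val + 1 = v.val := by
      rcases ty with h | h
      · left; rw [← h]; rfl
      · right; rw [← h]; rfl
    have ez : z.val = v.val ∨ z.val + 1 = v.val := by
      rcases tz with h | h
      · left; rw [← h]; rfl
      · right; rw [← h]; rfl
    have : x.val = y.val ∨ x.val = z.val ∨ y.val = z.val := by omega
    rcases this with h | h | h
    · exact hxy (Fin.ext h)
    · exact hxz (Fin.ext h)
    · exact hyz (Fin.ext h)


section Closure
variable {V : Type*} [Fintype V] [DecidableEq V] {n : ℕ}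

lemma inv_mutQ {B : V → V → ℤ} (hInv : Inv n B) (k : V) : Inv n (mutQ B k) := by
  classical
  obtain ⟨a, b, h1, h2, h3, h4, h5, h6, h7⟩ := hInv
  have hdiag : ∀ x, B x x = 0 := fun x => by have := h4 x x; omega
  have huw : a k ≠ b k := h1 k
  have hBval : ∀ x y : V, B x y = 1 ∨ B x y = 0 ∨ B x y = -1 := by
    intro x y
    by_cases hxy : x = y
    · right; left; rw [hxy]; exact hdiag y
    · by_cases hsh : Shares a b x y
      · have := (h3 x y hxy).1 hsh
        rcases Int.natAbs_eq_iff.mp this with h | h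
        · left; exact_mod_cast h
        · right; right; exact_mod_cast h
      · right; left; exact (h3 x y hxy).2 hsh
  have hShB : ∀ x y, x ≠ y → ¬ Shares a b x y → B x y = 0 := fun x y hxy => (h3 x y hxy).2
  have hBSh : ∀ x y, x ≠ y → B x y ≠ 0 → Shares a b x y := by
    intro x y hxy hB
    by_contra hs; exact hB (hShB x y hxy hs)
  -- the swap of the two endpoints of k
  set σ : Fin (n+1) → Fin (n+1) :=
    fun v => if v = a k then b k else if v = b k then a k else v with hσdef
  have hσu : σ (a k) = b k := by rw [hσdef]; simp
  have hσw : σ (b k) = a k := by rw [hσdef]; simp [huw.symm]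
  have hσfix : ∀ v, v ≠ a k → v ≠ b k → σ v = v := by
    intro v hv1 hv2; rw [hσdef]; simp [hv1, hv2]
  have hσσ : ∀ v, σ (σ v) = v := by
    intro v
    by_cases hv1 : v = a k
    · rw [hv1, hσu, hσw]
    · by_cases hv2 : v = b k
      · rw [hv2, hσw, hσu]
      · rw [hσfix v hv1 hv2, hσfix v hv1 hv2]
  have hσinj : Function.Injective σ := fun v1 v2 h => by rw [← hσσ v1, h, hσσ]
  have hσpair : ∀ v, (v = a k ∨ v = b k) → (σ v = a k ∨ σ v = b k) := by
    rintro v (h | h)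
    · right; rw [h, hσu]
    · left; rw [h, hσw]
  have hσpair' : ∀ v, (σ v = a k ∨ σ v = b k) → (v = a k ∨ v = b k) := by
    intro v h
    have := hσpair (σ v) h
    rwa [hσσ] at this
  have hσne : ∀ v, (v = a k ∨ v = b k) → σ v ≠ v := by
    rintro v (h | h)
    · rw [h, hσu]; exact huw.symm
    · rw [h, hσw]; exact huw
  -- new endpoints
  set a' : V → Fin (n+1) := fun x => if 0 < B x k then σ (a x) else a x with ha'def
  set b' : V → Fin (n+1) := fun x => if 0 < B x k then σ (b x) else b x with hb'def
  have hSk : ¬ (0 < B k k) := by rw [hdiag k]; omega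
  have ha'pos : ∀ x, 0 < B x k → a' x = σ (a x) ∧ b' x = σ (b x) := by
    intro x hx; rw [ha'def, hb'def]; simp [hx]
  have ha'neg : ∀ x, ¬ 0 < B x k → a' x = a x ∧ b' x = b x := by
    intro x hx; rw [ha'def, hb'def]; simp [hx]
  have ha'k : a' k = a k := (ha'neg k hSk).1
  have hb'k : b' k = b k := (ha'neg k hSk).2
  -- classification of an edge adjacent to k
  have hadjk : ∀ x, x ≠ k → B x k ≠ 0 →
      ((a x = a k ∨ a x = b k) ∧ b x ≠ a k ∧ b x ≠ b k) ∨
      ((b x = a k ∨ b x = b k) ∧ a x ≠ a k ∧ a x ≠ b k) := by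
    intro x hxk hB
    obtain ⟨v, tx, tk⟩ := hBSh x k hxk hB
    have hpne := pairs_ne h2 hxk
    rcases tx with hx1 | hx1 <;> rcases tk with hk1 | hk1
    · left
      refine ⟨Or.inl (hx1.trans hk1.symm), ?_, ?_⟩
      · intro hbx; exact h1 x ((hx1.trans hk1.symm).trans hbx.symm)
      · intro hbx; exact hpne (Or.inl ⟨hx1.trans hk1.symm, hbx⟩)
    · left
      refine ⟨Or.inr (hx1.trans hk1.symm), ?_, ?_⟩
      · intro hbx; exact hpne (Or.inr ⟨hx1.trans hk1.symm, hbx⟩)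
      · intro hbx; exact h1 x ((hx1.trans hk1.symm).trans hbx.symm)
    · right
      refine ⟨Or.inl (hx1.trans hk1.symm), ?_, ?_⟩
      · intro hax; exact h1 x (hax.trans (hx1.trans hk1.symm).symm)
      · intro hax; exact hpne (Or.inr ⟨hax, hx1.trans hk1.symm⟩)
    · right
      refine ⟨Or.inr (hx1.trans hk1.symm), ?_, ?_⟩
      · intro hax; exact hpne (Or.inl ⟨hax, hx1.trans hk1.symm⟩)
      · intro hax; exact h1 x (hax.trans (hx1.trans hk1.symm).symm)
  -- endpoint data for slid edges
  have hslid : ∀ x, x ≠ k → 0 < B x k → ∃ vx tx : Fin (n+1),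
      (vx = a k ∨ vx = b k) ∧ tx ≠ a k ∧ tx ≠ b k ∧
      (∀ v', Touch a b x v' ↔ (v' = vx ∨ v' = tx)) ∧
      (∀ v', Touch a' b' x v' ↔ (v' = σ vx ∨ v' = tx)) := by
    intro x hxk hS
    obtain ⟨hax, hbx⟩ := ha'pos x hS
    rcases hadjk x hxk (by omega) with ⟨hv, hb1, hb2⟩ | ⟨hv, hc1, hc2⟩
    · refine ⟨a x, b x, hv, hb1, hb2, ?_, ?_⟩
      · intro v'
        constructor
        · rintro (h | h)
          · exact Or.inl h.symm
          · exact Or.inr h.symm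
        · rintro (h | h)
          · exact Or.inl h.symm
          · exact Or.inr h.symm
      · intro v'
        have hb'x : b' x = b x := by rw [hbx, hσfix _ hb1 hb2]
        constructor
        · rintro (h | h)
          · left; rw [← h, hax]
          · right; rw [← h, hb'x]
        · rintro (h | h)
          · left; rw [hax, h]
          · right; rw [hb'x, h]
    · refine ⟨b x, a x, hv, hc1, hc2, ?_, ?_⟩
      · intro v'
        constructor
        · rintro (h | h)
          · exact Or.inr h.symm
          · exact Or.inl h.symm
        · rintro (h | h)
          · exact Or.inr h.symm
          · exact Or.inl h.symm
      · intro v'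
        have ha'x : a' x = a x := by rw [hax, hσfix _ hc1 hc2]
        constructor
        · rintro (h | h)
          · right; rw [← h, ha'x]
          · left; rw [← h, hbx]
        · rintro (h | h)
          · right; rw [hbx, h]
          · left; rw [ha'x, h]
  -- endpoint data for adjacent unslid edges
  have hunslid : ∀ x, x ≠ k → B x k < 0 → ∃ vx tx : Fin (n+1),
      (vx = a k ∨ vx = b k) ∧ tx ≠ a k ∧ tx ≠ b k ∧
      (∀ v', Touch a b x v' ↔ (v' = vx ∨ v' = tx)) ∧
      (∀ v', Touch a' b' x v' ↔ (v' = vx ∨ v' = tx)) := by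
    intro x hxk hS
    obtain ⟨hax, hbx⟩ := ha'neg x (by omega)
    have hiff : ∀ v', Touch a' b' x v' ↔ Touch a b x v' := by
      intro v'; unfold Touch; rw [hax, hbx]
    rcases hadjk x hxk (by omega) with ⟨hv, hb1, hb2⟩ | ⟨hv, hc1, hc2⟩
    · have hold : ∀ v', Touch a b x v' ↔ (v' = a x ∨ v' = b x) := by
        intro v'
        constructor
        · rintro (h | h)
          · exact Or.inl h.symm
          · exact Or.inr h.symm
        · rintro (h | h)
          · exact Or.inl h.symm
          · exact Or.inr h.symm
      exact ⟨a x, b x, hv, hb1, hb2, hold, fun v' => (hiff v').trans (hold v')⟩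
    · have hold : ∀ v', Touch a b x v' ↔ (v' = b x ∨ v' = a x) := by
        intro v'
        constructor
        · rintro (h | h)
          · exact Or.inr h.symm
          · exact Or.inl h.symm
        · rintro (h | h)
          · exact Or.inr h.symm
          · exact Or.inl h.symm
      exact ⟨b x, a x, hv, hc1, hc2, hold, fun v' => (hiff v').trans (hold v')⟩
  -- two distinct edges with the same endpoints contradict independence
  have hpair_eq_contra : ∀ x y, x ≠ y → ∀ p q : Fin (n+1), p ≠ q →
      Touch a b x p → Touch a b x q → Touch a b y p → Touch a b y q → False := by
    intro x y hxy p q hpq hxp hxq hyp hyq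
    rcases touch_pair (h1 x) hpq hxp hxq with ⟨e1, e2⟩ | ⟨e1, e2⟩ <;>
      rcases touch_pair (h1 y) hpq hyp hyq with ⟨f1, f2⟩ | ⟨f1, f2⟩
    · exact pairs_ne h2 hxy (Or.inl ⟨e1.trans f1.symm, e2.trans f2.symm⟩)
    · exact pairs_ne h2 hxy (Or.inr ⟨e1.trans f2.symm, e2.trans f1.symm⟩)
    · exact pairs_ne h2 hxy (Or.inr ⟨e1.trans f2.symm, e2.trans f1.symm⟩)
    · exact pairs_ne h2 hxy (Or.inl ⟨e1.trans f1.symm, e2.trans f2.symm⟩)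
  -- k touches its own endpoints
  have hktouch : ∀ v, (v = a k ∨ v = b k) → Touch a b k v := by
    rintro v (h | h)
    · exact Or.inl h.symm
    · exact Or.inr h.symm
  -- k touches its own endpoints (primed version)
  have htouch_congr : ∀ (x : V) (c d : V → Fin (n+1)) (v : Fin (n+1)),
      c x = a x → d x = b x → (Touch c d x v ↔ Touch a b x v) := by
    intro x c d v hc hd
    unfold Touch
    rw [hc, hd]
  -- a vertex not adjacent to k has no endpoint in k's pair
  have hnonadj : ∀ x, x ≠ k → B x k = 0 → ∀ v, Touch a b x v → (v ≠ a k ∧ v ≠ b k) := by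
    intro x hxk hB v hv
    constructor <;> intro he
    · have hsh : Shares a b x k := ⟨v, hv, hktouch v (Or.inl he)⟩
      have := (h3 x k hxk).1 hsh
      rw [hB] at this
      simp at this
    · have hsh : Shares a b x k := ⟨v, hv, hktouch v (Or.inr he)⟩
      have := (h3 x k hxk).1 hsh
      rw [hB] at this
      simp at this
  -- touching transfers when the vertex is away from k's pair
  have htouch_fix : ∀ (x : V) (v : Fin (n+1)), v ≠ a k → v ≠ b k →
      (Touch a' b' x v ↔ Touch a b x v) := by
    intro x v hv1 hv2
    by_cases hS : 0 < B x k
    · obtain ⟨hax, hbx⟩ := ha'pos x hS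
      have hσv : ∀ e : Fin (n+1), σ e = v ↔ e = v := by
        intro e
        constructor
        · intro h
          by_cases he1 : e = a k
          · rw [he1, hσu] at h; exact absurd h.symm hv2
          · by_cases he2 : e = b k
            · rw [he2, hσw] at h; exact absurd h.symm hv1
            · rwa [hσfix e he1 he2] at h
        · intro h
          rw [h]; exact hσfix v hv1 hv2
      unfold Touch
      rw [hax, hbx, hσv (a x), hσv (b x)]
    · obtain ⟨hax, hbx⟩ := ha'neg x hS
      exact htouch_congr x a' b' v hax hbx
  -- share transfer when x is not adjacent to k
  have hShEq0 : ∀ x y, x ≠ k → B x k = 0 → (Shares a' b' x y ↔ Shares a b x y) := by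
    intro x y hxk hB
    obtain ⟨hax, hbx⟩ := ha'neg x (by omega)
    have htx : ∀ v, Touch a' b' x v ↔ Touch a b x v :=
      fun v => htouch_congr x a' b' v hax hbx
    constructor
    · rintro ⟨v, t1, t2⟩
      have t1' := (htx v).mp t1
      have hnv := hnonadj x hxk hB v t1'
      exact ⟨v, t1', (htouch_fix y v hnv.1 hnv.2).mp t2⟩
    · rintro ⟨v, t1, t2⟩
      have hnv := hnonadj x hxk hB v t1
      exact ⟨v, (htx v).mpr t1, (htouch_fix y v hnv.1 hnv.2).mpr t2⟩
  -- share transfer through k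
  have hShk' : ∀ x, x ≠ k → (Shares a' b' x k ↔ Shares a b x k) := by
    intro x hxk
    constructor
    · rintro ⟨v, t1, t2⟩
      have hvp : v = a k ∨ v = b k := by
        rcases t2 with h | h
        · left; rw [← h, ha'k]
        · right; rw [← h, hb'k]
      by_cases hS : 0 < B x k
      · obtain ⟨hax, hbx⟩ := ha'pos x hS
        rcases t1 with h | h
        · rw [hax] at h
          have : a x = σ v := by rw [← h]; exact (hσσ (a x)).symm
          exact ⟨a x, Or.inl rfl, hktouch (a x) (this ▸ hσpair v hvp)⟩
        · rw [hbx] at h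
          have : b x = σ v := by rw [← h]; exact (hσσ (b x)).symm
          exact ⟨b x, Or.inr rfl, hktouch (b x) (this ▸ hσpair v hvp)⟩
      · obtain ⟨hax, hbx⟩ := ha'neg x hS
        exact ⟨v, (htouch_congr x a' b' v hax hbx).mp t1, hktouch v hvp⟩
    · rintro ⟨v, t1, t2⟩
      have hvp : v = a k ∨ v = b k := by
        rcases t2 with h | h
        · left; exact h.symm
        · right; exact h.symm
      by_cases hS : 0 < B x k
      · obtain ⟨hax, hbx⟩ := ha'pos x hS
        rcases t1 with h | h
        · refine ⟨σ v, ?_, ?_⟩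
          · left; rw [hax, h]
          · rcases hσpair v hvp with h' | h'
            · rw [h']; exact Or.inl ha'k
            · rw [h']; exact Or.inr hb'k
        · refine ⟨σ v, ?_, ?_⟩
          · right; rw [hbx, h]
          · rcases hσpair v hvp with h' | h'
            · rw [h']; exact Or.inl ha'k
            · rw [h']; exact Or.inr hb'k
      · obtain ⟨hax, hbx⟩ := ha'neg x hS
        refine ⟨v, (htouch_congr x a' b' v hax hbx).mpr t1, ?_⟩
        rcases hvp with h' | h'
        · rw [h']; exact Or.inl ha'k
        · rw [h']; exact Or.inr hb'k
  -- share transfer when both are slid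
  have hShBoth : ∀ x y, x ≠ k → y ≠ k → 0 < B x k → 0 < B y k →
      (Shares a' b' x y ↔ Shares a b x y) := by
    intro x y hxk hyk hSx hSy
    obtain ⟨vx, tx, hvx, htx1, htx2, hxold, hxnew⟩ := hslid x hxk hSx
    obtain ⟨vy, ty, hvy, hty1, hty2, hyold, hynew⟩ := hslid y hyk hSy
    constructor
    · rintro ⟨v, t1, t2⟩
      rcases (hxnew v).mp t1 with h | h <;> rcases (hynew v).mp t2 with h' | h'
      · have hvxy : vx = vy := hσinj (by rw [← h, ← h'])
        exact ⟨vx, (hxold vx).mpr (Or.inl rfl), (hyold vx).mpr (Or.inl hvxy)⟩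
      · exfalso
        have : ty = σ vx := h'.symm.trans h
        rcases hσpair vx hvx with h'' | h''
        · exact hty1 (this.trans h'')
        · exact hty2 (this.trans h'')
      · exfalso
        have : tx = σ vy := h.symm.trans h'
        rcases hσpair vy hvy with h'' | h''
        · exact htx1 (this.trans h'')
        · exact htx2 (this.trans h'')
      · have : tx = ty := h.symm.trans h'
        exact ⟨tx, (hxold tx).mpr (Or.inr rfl), (hyold tx).mpr (Or.inr this)⟩
    · rintro ⟨v, t1, t2⟩
      rcases (hxold v).mp t1 with h | h <;> rcases (hyold v).mp t2 with h' | h'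
      · have hvxy : vx = vy := h.symm.trans h'
        exact ⟨σ vx, (hxnew (σ vx)).mpr (Or.inl rfl), (hynew (σ vx)).mpr (Or.inl (by rw [hvxy]))⟩
      · exfalso
        have : ty = vx := h'.symm.trans h
        rcases hvx with h'' | h''
        · exact hty1 (this.trans h'')
        · exact hty2 (this.trans h'')
      · exfalso
        have : tx = vy := h.symm.trans h'
        rcases hvy with h'' | h''
        · exact htx1 (this.trans h'')
        · exact htx2 (this.trans h'')
      · have : tx = ty := h.symm.trans h'
        exact ⟨tx, (hxnew tx).mpr (Or.inr rfl), (hynew tx).mpr (Or.inr this)⟩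
  -- classification of new edges at an endpoint of k
  have hclassify : ∀ v, (v = a k ∨ v = b k) → ∀ t, Touch a' b' t v →
      t = k ∨ (¬ 0 < B t k ∧ Touch a b t v ∧ t ≠ k) ∨ (0 < B t k ∧ Touch a b t (σ v)) := by
    intro v hv t ht
    by_cases htk : t = k
    · exact Or.inl htk
    by_cases hS : 0 < B t k
    · right; right
      refine ⟨hS, ?_⟩
      obtain ⟨hax, hbx⟩ := ha'pos t hS
      rcases ht with h | h
      · rw [hax] at h
        left
        rw [← h]
        exact (hσσ (a t)).symm
      · rw [hbx] at h
        right
        rw [← h]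
        exact (hσσ (b t)).symm
    · right; left
      obtain ⟨hax, hbx⟩ := ha'neg t hS
      exact ⟨hS, (htouch_congr t a' b' v hax hbx).mp ht, htk⟩
  -- uniqueness of the non-slid neighbor
  have hPuniq : ∀ v, (v = a k ∨ v = b k) → ∀ x y,
      (¬ 0 < B x k ∧ Touch a b x v ∧ x ≠ k) → (¬ 0 < B y k ∧ Touch a b y v ∧ y ≠ k) → x = y := by
    intro v hv x y hPx hPy
    by_contra hne
    have h7' := h7 x y k hne hPx.2.2 hPy.2.2 v hPx.2.1 hPy.2.1 (hktouch v hv)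
    rcases h7' with ⟨_, hc2, _⟩ | ⟨hc1, _, _⟩
    · exact hPy.1 hc2
    · exact hPx.1 hc1
  -- uniqueness of the slid neighbor
  have hQuniq : ∀ v, (v = a k ∨ v = b k) → ∀ x y,
      (0 < B x k ∧ Touch a b x (σ v)) → (0 < B y k ∧ Touch a b y (σ v)) → x = y := by
    intro v hv x y hQx hQy
    by_contra hne
    have hxk : x ≠ k := fun h => hSk (h ▸ hQx.1)
    have hyk : y ≠ k := fun h => hSk (h ▸ hQy.1)
    have h7' := h7 x y k hne hxk hyk (σ v) hQx.2 hQy.2 (hktouch (σ v) (hσpair v hv))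
    rcases h7' with ⟨_, _, hc3⟩ | ⟨_, hc2, _⟩
    · have h4' := h4 k x
      omega
    · have h4' := h4 k y
      omega
  -- the main asymmetric case of the edge-count condition
  have maincase : ∀ x y, x ≠ y → x ≠ k → y ≠ k → 0 < B x k → B y k < 0 →
      ((Shares a' b' x y → (mutQ B k x y).natAbs = 1) ∧
       (¬ Shares a' b' x y → mutQ B k x y = 0)) := by
    intro x y hxy hxk hyk hSx hSy
    have hBxk : B x k = 1 := by rcases hBval x k with h | h | h <;> omega
    have hByk : B y k = -1 := by rcases hBval y k with h | h | h <;> omega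
    have hBky : B k y = 1 := by have := h4 y k; omega
    have hmut : mutQ B k x y = B x y + 1 := by
      rw [mutQ_ne hxk hyk, hBxk, hBky, Int.sign_one]
      norm_num
    obtain ⟨vx, tx, hvx, htx1, htx2, hxold, hxnew⟩ := hslid x hxk hSx
    obtain ⟨vy, ty, hvy, hty1, hty2, hyold, hynew⟩ := hunslid y hyk hSy
    have hvxtx : vx ≠ tx := by
      rcases hvx with h | h
      · rw [h]; exact fun hh => htx1 hh.symm
      · rw [h]; exact fun hh => htx2 hh.symm
    by_cases hvv : vx = vy
    · -- x and y hang on the same endpoint of k : old oriented triangle resolves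
      have htxy : Touch a b x vx := (hxold vx).mpr (Or.inl rfl)
      have htyy : Touch a b y vx := (hyold vx).mpr (Or.inl hvv)
      have h7' := h7 x k y hxk hxy (Ne.symm hyk) vx htxy (hktouch vx hvx) htyy
      have hBxy : B x y = -1 := by
        rcases h7' with ⟨_, _, hc3⟩ | ⟨hc1, hc2, _⟩
        · -- Cyc3 B x k y : 0 < B y x
          have := h4 x y
          rcases hBval y x with h | h | h <;> omega
        · -- Cyc3 B x y k : 0 < B y k, contradiction
          omega
      have hnos : ¬ Shares a' b' x y := by
        rintro ⟨v, t1, t2⟩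
        rcases (hxnew v).mp t1 with h | h <;> rcases (hynew v).mp t2 with h' | h'
        · -- v = σ vx and v = vy = vx
          exact hσne vx hvx (h.symm.trans (h'.trans hvv.symm))
        · -- v = σ vx and v = ty : ty in the pair, contradiction
          have : ty = σ vx := h'.symm.trans h
          rcases hσpair vx hvx with h'' | h''
          · exact hty1 (this.trans h'')
          · exact hty2 (this.trans h'')
        · -- v = tx = vy = vx : tx in pair
          have : tx = vx := h.symm.trans (h'.trans hvv.symm)
          rcases hvx with h'' | h''
          · exact htx1 (this.trans h'')
          · exact htx2 (this.trans h'')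
        · -- tx = ty : the two edges coincide
          have htt : tx = ty := h.symm.trans h'
          exact hpair_eq_contra x y hxy vx tx hvxtx htxy
            ((hxold tx).mpr (Or.inr rfl)) htyy ((hyold tx).mpr (Or.inr htt))
      constructor
      · intro hs; exact absurd hs hnos
      · intro _
        rw [hmut, hBxy]
        norm_num
    · -- x and y hang on opposite endpoints of k
      have hσvx : σ vx = vy := by
        rcases hvx with h | h <;> rcases hvy with h' | h'
        · exact absurd (h.trans h'.symm) hvv
        · rw [h, h', hσu]
        · rw [h, h', hσw]
        · exact absurd (h.trans h'.symm) hvv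
      by_cases htt : tx = ty
      · -- would be a triangle without common vertex
        exfalso
        have s1 : Shares a b x y :=
          ⟨tx, (hxold tx).mpr (Or.inr rfl), (hyold tx).mpr (Or.inr htt)⟩
        have s2 : Shares a b y k := ⟨vy, (hyold vy).mpr (Or.inl rfl), hktouch vy hvy⟩
        have s3 : Shares a b k x := shares_comm ⟨vx, (hxold vx).mpr (Or.inl rfl), hktouch vx hvx⟩
        obtain ⟨v0, c1, c2, c3⟩ := common_vertex h1 h2 hxy hxk hyk s1 s2 s3
        have hv0 : v0 = a k ∨ v0 = b k := by
          rcases c3 with h | h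
          · exact Or.inl h.symm
          · exact Or.inr h.symm
        have hv0x : v0 = vx := by
          rcases (hxold v0).mp c1 with h | h
          · exact h
          · exfalso
            rcases hv0 with h' | h'
            · exact htx1 (h ▸ h')
            · exact htx2 (h ▸ h')
        have hv0y : v0 = vy := by
          rcases (hyold v0).mp c2 with h | h
          · exact h
          · exfalso
            rcases hv0 with h' | h'
            · exact hty1 (h ▸ h')
            · exact hty2 (h ▸ h')
        exact hvv (hv0x.symm.trans hv0y)
      · -- no old edge, new edge appears
        have hBxy : B x y = 0 := by
          apply hShB x y hxy
          rintro ⟨v, t1, t2⟩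
          rcases (hxold v).mp t1 with h | h <;> rcases (hyold v).mp t2 with h' | h'
          · exact hvv (h.symm.trans h')
          · have : ty = vx := h'.symm.trans h
            rcases hvx with h'' | h''
            · exact hty1 (this.trans h'')
            · exact hty2 (this.trans h'')
          · have : tx = vy := h.symm.trans h'
            rcases hvy with h'' | h''
            · exact htx1 (this.trans h'')
            · exact htx2 (this.trans h'')
          · exact htt (h.symm.trans h')
        constructor
        · intro _
          rw [hmut, hBxy]
          rfl
        · intro hns
          exfalso
          apply hns
          exact ⟨vy, (hxnew vy).mpr (Or.inl hσvx.symm), (hynew vy).mpr (Or.inl rfl)⟩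
  -- the full edge-count condition
  have hI3' : ∀ x y : V, x ≠ y →
      ((Shares a' b' x y → (mutQ B k x y).natAbs = 1) ∧
       (¬ Shares a' b' x y → mutQ B k x y = 0)) := by
    intro x y hxy
    by_cases hxk : x = k
    · have hyk : y ≠ k := fun h => hxy (hxk.trans h.symm)
      have hky : k ≠ y := fun h => hyk h.symm
      have hsh : Shares a' b' x y ↔ Shares a b k y := by
        rw [hxk]
        constructor
        · intro h; exact shares_comm ((hShk' y hyk).mp (shares_comm h))
        · intro h; exact shares_comm ((hShk' y hyk).mpr (shares_comm h))
      constructor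
      · intro hs
        rw [hxk, mutQ_left, Int.natAbs_neg]
        exact (h3 k y hky).1 (hsh.mp hs)
      · intro hs
        rw [hxk, mutQ_left, (h3 k y hky).2 (fun h => hs (hsh.mpr h)), neg_zero]
    by_cases hyk : y = k
    · have hsh : Shares a' b' x y ↔ Shares a b x k := by
        rw [hyk]
        exact hShk' x hxk
      constructor
      · intro hs
        rw [hyk, mutQ_right, Int.natAbs_neg]
        exact (h3 x k (fun h => hxy (h.trans hyk.symm))).1 (hsh.mp hs)
      · intro hs
        rw [hyk, mutQ_right,
          (h3 x k (fun h => hxy (h.trans hyk.symm))).2 (fun h => hs (hsh.mpr h)), neg_zero]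
    -- both different from k
    rcases lt_trichotomy (B x k) 0 with hxs | hxs | hxs
    · rcases lt_trichotomy (B y k) 0 with hys | hys | hys
      · -- both not slid, entry unchanged
        have hmut : mutQ B k x y = B x y := by
          rw [mutQ_ne hxk hyk]
          have hky' : 0 < B k y := by have := h4 y k; omega
          have : B x k * B k y < 0 := mul_neg_of_neg_of_pos hxs hky'
          rw [max_eq_right this.le, mul_zero, add_zero]
        have hsh : Shares a' b' x y ↔ Shares a b x y := by
          obtain ⟨hax, hbx⟩ := ha'neg x (by omega)
          obtain ⟨hay, hby⟩ := ha'neg y (by omega)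
          constructor
          · rintro ⟨v, t1, t2⟩
            exact ⟨v, (htouch_congr x a' b' v hax hbx).mp t1,
              (htouch_congr y a' b' v hay hby).mp t2⟩
          · rintro ⟨v, t1, t2⟩
            exact ⟨v, (htouch_congr x a' b' v hax hbx).mpr t1,
              (htouch_congr y a' b' v hay hby).mpr t2⟩
        rw [hmut]
        exact ⟨fun hs => (h3 x y hxy).1 (hsh.mp hs), fun hs => (h3 x y hxy).2 (fun h => hs (hsh.mpr h))⟩
      · -- y not adjacent
        have hmut : mutQ B k x y = B x y := by
          rw [mutQ_ne hxk hyk]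
          have : B k y = 0 := by have := h4 y k; omega
          rw [this, mul_zero]
          simp
        have hsh := hShEq0 y x hyk hys
        rw [hmut]
        refine ⟨fun hs => (h3 x y hxy).1 ?_, fun hs => (h3 x y hxy).2 (fun h => hs ?_)⟩
        · exact shares_comm (hsh.mp (shares_comm hs))
        · exact shares_comm (hsh.mpr (shares_comm h))
      · -- x not slid & adjacent, y slid : mirrored main case
        have hm := maincase y x (Ne.symm hxy) hyk hxk hys hxs
        have hskew := mutQ_skew h4 k
        constructor
        · intro hs
          rw [show mutQ B k x y = - mutQ B k y x from hskew y x, Int.natAbs_neg]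
          exact hm.1 (shares_comm hs)
        · intro hs
          rw [show mutQ B k x y = - mutQ B k y x from hskew y x,
            hm.2 (fun h => hs (shares_comm h)), neg_zero]
    · -- x not adjacent
      have hmut : mutQ B k x y = B x y := by
        rw [mutQ_ne hxk hyk, hxs]
        simp
      have hsh := hShEq0 x y hxk hxs
      rw [hmut]
      exact ⟨fun hs => (h3 x y hxy).1 (hsh.mp hs), fun hs => (h3 x y hxy).2 (fun h => hs (hsh.mpr h))⟩
    · rcases lt_trichotomy (B y k) 0 with hys | hys | hys
      · -- the main case
        exact maincase x y hxy hxk hyk hxs hys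
      · -- y not adjacent
        have hmut : mutQ B k x y = B x y := by
          rw [mutQ_ne hxk hyk]
          have : B k y = 0 := by have := h4 y k; omega
          rw [this, mul_zero]
          simp
        have hsh := hShEq0 y x hyk hys
        rw [hmut]
        refine ⟨fun hs => (h3 x y hxy).1 ?_, fun hs => (h3 x y hxy).2 (fun h => hs ?_)⟩
        · exact shares_comm (hsh.mp (shares_comm hs))
        · exact shares_comm (hsh.mpr (shares_comm h))
      · -- both slid, entry unchanged
        have hmut : mutQ B k x y = B x y := by
          rw [mutQ_ne hxk hyk]
          have hky' : B k y < 0 := by have := h4 y k; omega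
          have : B x k * B k y < 0 := mul_neg_of_pos_of_neg hxs hky'
          rw [max_eq_right this.le, mul_zero, add_zero]
        have hsh := hShBoth x y hxk hyk hxs hys
        rw [hmut]
        exact ⟨fun hs => (h3 x y hxy).1 (hsh.mp hs), fun hs => (h3 x y hxy).2 (fun h => hs (hsh.mpr h))⟩
  -- the oriented-triangle condition
  have hcyc : ∀ v, (v = a k ∨ v = b k) → ∀ e f, e ≠ f →
      (¬ 0 < B e k ∧ Touch a b e v ∧ e ≠ k) → (0 < B f k ∧ Touch a b f (σ v)) →
      Cyc3 (mutQ B k) f e k := by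
    intro v hv e f hef hPe hQf
    have hek : e ≠ k := hPe.2.2
    have hfk : f ≠ k := fun h => hSk (h ▸ hQf.1)
    have hBek : B e k = -1 := by
      have hne : B e k ≠ 0 := by
        intro h0
        have := (h3 e k hek).1 ⟨v, hPe.2.1, hktouch v hv⟩
        rw [h0] at this
        simp at this
      rcases hBval e k with h | h | h
      · exact absurd (by omega : (0:ℤ) < B e k) hPe.1
      · exact absurd h hne
      · exact h
    have hBfk : B f k = 1 := by rcases hBval f k with h | h | h <;> omega
    have hBke : B k e = 1 := by have := h4 e k; omega
    have hBkf : B k f = -1 := by have := h4 f k; omega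
    have hBfe : B f e = 0 := by
      apply hShB f e (Ne.symm hef)
      rintro ⟨v0, t1, t2⟩
      obtain ⟨vf, tf, hvf, htf1, htf2, hfold, hfnew⟩ := hslid f hfk hQf.1
      obtain ⟨ve, te, hve, hte1, hte2, heold, henew⟩ := hunslid e hek (by omega)
      have hvfv : vf = σ v := by
        rcases (hfold (σ v)).mp hQf.2 with h | h
        · exact h.symm
        · exfalso
          rcases hσpair v hv with h' | h'
          · exact htf1 (h ▸ h')
          · exact htf2 (h ▸ h')
      have hvev : ve = v := by
        rcases (heold v).mp hPe.2.1 with h | h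
        · exact h.symm
        · exfalso
          rcases hv with h' | h'
          · exact hte1 (h ▸ h')
          · exact hte2 (h ▸ h')
      rcases (hfold v0).mp t1 with hf0 | hf0 <;> rcases (heold v0).mp t2 with he0 | he0
      · exact hσne v hv (by rw [← hvfv, ← hf0, he0, hvev])
      · rcases hσpair v hv with h' | h'
        · exact hte1 (by rw [← he0, hf0, hvfv, h'])
        · exact hte2 (by rw [← he0, hf0, hvfv, h'])
      · rcases hv with h' | h'
        · exact htf1 (by rw [← hf0, he0, hvev, h'])
        · exact htf2 (by rw [← hf0, he0, hvev, h'])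
      · have htfte : tf = te := hf0.symm.trans he0
        have s1 : Shares a b f e :=
          ⟨tf, (hfold tf).mpr (Or.inr rfl), (heold tf).mpr (Or.inr htfte)⟩
        have s2 : Shares a b e k := ⟨v, hPe.2.1, hktouch v hv⟩
        have s3 : Shares a b k f :=
          shares_comm ⟨σ v, (hfold (σ v)).mpr (Or.inl hvfv.symm), hktouch (σ v) (hσpair v hv)⟩
        obtain ⟨w0, c1, c2, c3⟩ := common_vertex h1 h2 (Ne.symm hef) hfk hek s1 s2 s3
        have hw0p : w0 = a k ∨ w0 = b k := by
          rcases c3 with h | h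
          · exact Or.inl h.symm
          · exact Or.inr h.symm
        have hw0e : w0 = v := by
          rcases (heold w0).mp c2 with h | h
          · rw [h, hvev]
          · exfalso
            rcases hw0p with h' | h'
            · exact hte1 (by rw [← h, h'])
            · exact hte2 (by rw [← h, h'])
        have hw0f : w0 = σ v := by
          rcases (hfold w0).mp c1 with h | h
          · rw [h, hvfv]
          · exfalso
            rcases hw0p with h' | h'
            · exact htf1 (by rw [← h, h'])
            · exact htf2 (by rw [← h, h'])
        exact hσne v hv (by rw [← hw0f, hw0e])
    refine ⟨?_, ?_, ?_⟩
    · rw [mutQ_ne hfk hek, hBfe, hBfk, hBke, Int.sign_one]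
      norm_num
    · rw [mutQ_right, hBek]
      norm_num
    · rw [mutQ_left, hBkf]
      norm_num
  have hI7' : ∀ x y z, x ≠ y → x ≠ z → y ≠ z → ∀ v,
      Touch a' b' x v → Touch a' b' y v → Touch a' b' z v →
      Cyc3 (mutQ B k) x y z ∨ Cyc3 (mutQ B k) x z y := by
    intro x y z hxy hxz hyz v tx ty tz
    by_cases hv : v = a k ∨ v = b k
    · rcases hclassify v hv x tx with hxk | hPx | hQx
      · rcases hclassify v hv y ty with hyk | hPy | hQy
        · exact absurd (hxk.trans hyk.symm) hxy
        · rcases hclassify v hv z tz with hzk | hPz | hQz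
          · exact absurd (hxk.trans hzk.symm) hxz
          · exact absurd (hPuniq v hv y z hPy hPz) hyz
          · have hc := hcyc v hv y z hyz hPy hQz
            right
            rw [hxk]
            exact cyc3_rot (cyc3_rot hc)
        · rcases hclassify v hv z tz with hzk | hPz | hQz
          · exact absurd (hxk.trans hzk.symm) hxz
          · have hc := hcyc v hv z y (Ne.symm hyz) hPz hQy
            left
            rw [hxk]
            exact cyc3_rot (cyc3_rot hc)
          · exact absurd (hQuniq v hv y z hQy hQz) hyz
      · rcases hclassify v hv y ty with hyk | hPy | hQy
        · rcases hclassify v hv z tz with hzk | hPz | hQz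
          · exact absurd (hyk.trans hzk.symm) hyz
          · exact absurd (hPuniq v hv x z hPx hPz) hxz
          · have hc := hcyc v hv x z hxz hPx hQz
            left
            rw [hyk]
            exact cyc3_rot hc
        · exact absurd (hPuniq v hv x y hPx hPy) hxy
        · rcases hclassify v hv z tz with hzk | hPz | hQz
          · have hc := hcyc v hv x y hxy hPx hQy
            right
            rw [hzk]
            exact cyc3_rot hc
          · exact absurd (hPuniq v hv x z hPx hPz) hxz
          · exact absurd (hQuniq v hv y z hQy hQz) hyz
      · rcases hclassify v hv y ty with hyk | hPy | hQy
        · rcases hclassify v hv z tz with hzk | hPz | hQz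
          · exact absurd (hyk.trans hzk.symm) hyz
          · have hc := hcyc v hv z x (fun h => hxz h.symm) hPz hQx
            right
            rw [hyk]
            exact hc
          · exact absurd (hQuniq v hv x z hQx hQz) hxz
        · rcases hclassify v hv z tz with hzk | hPz | hQz
          · have hc := hcyc v hv y x (fun h => hxy h.symm) hPy hQx
            left
            rw [hzk]
            exact hc
          · exact absurd (hPuniq v hv y z hPy hPz) hyz
          · exact absurd (hQuniq v hv x z hQx hQz) hxz
        · exact absurd (hQuniq v hv x y hQx hQy) hxy
    · push_neg at hv
      have tx' := (htouch_fix x v hv.1 hv.2).mp tx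
      have ty' := (htouch_fix y v hv.1 hv.2).mp ty
      have tz' := (htouch_fix z v hv.1 hv.2).mp tz
      have hknot : ∀ t : V, Touch a b t v → t ≠ k := by
        intro t ht hteq
        rw [hteq] at ht
        rcases ht with h | h
        · exact hv.1 h.symm
        · exact hv.2 h.symm
      have hxk := hknot x tx'
      have hyk := hknot y ty'
      have hzk := hknot z tz'
      have hent : ∀ p q, p ≠ q → p ≠ k → q ≠ k → Touch a b p v → Touch a b q v →
          mutQ B k p q = B p q := by
        intro p q hpq hpk hqk tp tq
        rw [mutQ_ne hpk hqk]
        rcases eq_or_ne (B p k) 0 with h0 | h0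
        · rw [h0]; simp
        rcases eq_or_ne (B k q) 0 with h0' | h0'
        · rw [h0', mul_zero]; simp
        exfalso
        have hq0 : B q k ≠ 0 := by
          have := h4 q k
          omega
        have s1 : Shares a b p q := ⟨v, tp, tq⟩
        have s2 : Shares a b q k := hBSh q k hqk hq0
        have s3 : Shares a b k p := shares_comm (hBSh p k hpk h0)
        obtain ⟨v0, c1, c2, c3⟩ := common_vertex h1 h2 hpq hpk hqk s1 s2 s3
        have hv0 : v0 = a k ∨ v0 = b k := by
          rcases c3 with h | h
          · exact Or.inl h.symm
          · exact Or.inr h.symm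
        have hv0v : v0 ≠ v := by
          intro h
          rcases hv0 with h' | h'
          · exact hv.1 (h.symm.trans h')
          · exact hv.2 (h.symm.trans h')
        exact hpair_eq_contra p q hpq v v0 (Ne.symm hv0v) tp c1 tq c2
      rcases h7 x y z hxy hxz hyz v tx' ty' tz' with hC | hC
      · left
        exact ⟨by rw [hent x y hxy hxk hyk tx' ty']; exact hC.1,
          by rw [hent y z hyz hyk hzk ty' tz']; exact hC.2.1,
          by rw [hent z x (Ne.symm hxz) hzk hxk tz' tx']; exact hC.2.2⟩
      · right
        exact ⟨by rw [hent x z hxz hxk hzk tx' tz']; exact hC.1,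
          by rw [hent z y (Ne.symm hyz) hzk hyk tz' ty']; exact hC.2.1,
          by rw [hent y x (Ne.symm hxy) hyk hxk ty' tx']; exact hC.2.2⟩
  have hI6' : ∀ (v : Fin (n+1)) (s : Finset V), (∀ x ∈ s, Touch a' b' x v) → s.card ≤ 3 := by
    intro v s hs
    by_cases hv : v = a k ∨ v = b k
    · refine card_le_three_classes (k := k)
        (P := fun x => ¬ 0 < B x k ∧ Touch a b x v ∧ x ≠ k)
        (Q := fun x => 0 < B x k ∧ Touch a b x (σ v)) ?_ ?_ ?_
      · intro x hx
        exact hclassify v hv x (hs x hx)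
      · intro x _ y _ hPx hPy
        exact hPuniq v hv x y hPx hPy
      · intro x _ y _ hQx hQy
        exact hQuniq v hv x y hQx hQy
    · push_neg at hv
      exact h6 v s (fun x hx => (htouch_fix x v hv.1 hv.2).mp (hs x hx))
  have hI5' : ∀ S : Finset (Fin (n+1)), S.Nonempty → S ≠ Finset.univ →
      ∃ x, ¬((a' x ∈ S) ↔ (b' x ∈ S)) := by
    intro S hS1 hS2
    by_contra hcon
    push_neg at hcon
    have hk := hcon k
    rw [ha'k, hb'k] at hk
    have hσS : ∀ v, σ v ∈ S ↔ v ∈ S := by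
      intro v
      by_cases h1v : v = a k
      · rw [h1v, hσu]; exact hk.symm
      · by_cases h2v : v = b k
        · rw [h2v, hσw]; exact hk
        · rw [hσfix v h1v h2v]
    obtain ⟨x, hx⟩ := h5 S hS1 hS2
    apply hx
    have hcx := hcon x
    by_cases hS : 0 < B x k
    · obtain ⟨hax, hbx⟩ := ha'pos x hS
      rw [hax, hbx, hσS, hσS] at hcx
      exact hcx
    · obtain ⟨hax, hbx⟩ := ha'neg x hS
      rw [hax, hbx] at hcx
      exact hcx
  refine ⟨a', b', ?_, ?_, hI3', mutQ_skew h4 k, hI5', hI6', hI7'⟩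
  · intro x
    by_cases hS : 0 < B x k
    · obtain ⟨hax, hbx⟩ := ha'pos x hS
      rw [hax, hbx]
      exact fun h => h1 x (hσinj h)
    · obtain ⟨hax, hbx⟩ := ha'neg x hS
      rw [hax, hbx]
      exact h1 x
  · set cc : V → ℤ :=
      fun x => if 0 < B x k then (if a x = a k ∨ b x = b k then -1 else 1) else 0 with hccdef
    have hgveq : ∀ x, gvec n (a' x) (b' x)
        = gvec n (a x) (b x) + cc x • gvec n (a k) (b k) := by
      intro x
      by_cases hS : 0 < B x k
      · have hxk : x ≠ k := fun h => hSk (h ▸ hS)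
        obtain ⟨hax, hbx⟩ := ha'pos x hS
        rcases hadjk x hxk (by omega) with ⟨(hc | hc), hd1, hd2⟩ | ⟨(hc | hc), hd1, hd2⟩
        · have e1 : a' x = b k := by rw [hax, hc, hσu]
          have e2 : b' x = b x := by rw [hbx, hσfix _ hd1 hd2]
          have e3 : cc x = -1 := by rw [hccdef]; simp [hS, hc]
          rw [e1, e2, e3, hc, neg_smul, one_smul]
          funext t
          simp only [gvec, Pi.add_apply, Pi.neg_apply]
          ring
        · have e1 : a' x = a k := by rw [hax, hc, hσw]
          have e2 : b' x = b x := by rw [hbx, hσfix _ hd1 hd2]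
          have e3 : cc x = 1 := by
            rw [hccdef]
            have h1' : a x ≠ a k := by rw [hc]; exact huw.symm
            simp [hS, h1', hd2]
          rw [e1, e2, e3, hc, one_smul]
          funext t
          simp only [gvec, Pi.add_apply]
          ring
        · have e1 : a' x = a x := by rw [hax, hσfix _ hd1 hd2]
          have e2 : b' x = b k := by rw [hbx, hc, hσu]
          have e3 : cc x = 1 := by
            rw [hccdef]
            have h2' : b x ≠ b k := by rw [hc]; exact huw
            simp [hS, hd1, h2']
          rw [e1, e2, e3, hc, one_smul]
          funext t
          simp only [gvec, Pi.add_apply]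
          ring
        · have e1 : a' x = a x := by rw [hax, hσfix _ hd1 hd2]
          have e2 : b' x = a k := by rw [hbx, hc, hσw]
          have e3 : cc x = -1 := by rw [hccdef]; simp [hS, hc]
          rw [e1, e2, e3, hc, neg_smul, one_smul]
          funext t
          simp only [gvec, Pi.add_apply, Pi.neg_apply]
          ring
      · obtain ⟨hax, hbx⟩ := ha'neg x hS
        have e3 : cc x = 0 := by rw [hccdef]; simp [hS]
        rw [hax, hbx, e3, zero_smul, add_zero]
    have heq : (fun x => gvec n (a' x) (b' x))
        = fun x => (fun t => gvec n (a t) (b t)) x + cc x • (fun t => gvec n (a t) (b t)) k := by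
      funext x
      exact hgveq x
    rw [heq]
    exact elem_indep h2 k cc (by rw [hccdef]; simp [hSk])

end Closure

lemma deg_sum {V : Type*} [Fintype V] [DecidableEq V] {n : ℕ}
    (a b : V → Fin (n+1)) (A : Finset V) (W : Finset (Fin (n+1)))
    (hT : ∀ x ∈ A, a x ∈ W ∧ b x ∈ W ∧ a x ≠ b x) :
    ∑ v ∈ W, (A.filter (fun x => a x = v ∨ b x = v)).card = 2 * A.card := by
  classical
  have e1 : ∀ v, (A.filter (fun x => a x = v ∨ b x = v)).card
      = ∑ x ∈ A, (if a x = v ∨ b x = v then 1 else 0) := by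
    intro v
    rw [Finset.card_filter]
  rw [Finset.sum_congr rfl (fun v _ => e1 v), Finset.sum_comm]
  rw [show (2 * A.card) = ∑ _x ∈ A, 2 from by rw [Finset.sum_const, smul_eq_mul, mul_comm]]
  apply Finset.sum_congr rfl
  intro x hx
  obtain ⟨ha, hb, hab⟩ := hT x hx
  rw [← Finset.card_filter]
  have e2 : W.filter (fun v => a x = v ∨ b x = v) = {a x, b x} := by
    ext v
    simp only [Finset.mem_filter, Finset.mem_insert, Finset.mem_singleton]
    constructor
    · rintro ⟨_, (h | h)⟩
      · exact Or.inl h.symm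
      · exact Or.inr h.symm
    · rintro (h | h)
      · exact ⟨h ▸ ha, Or.inl h.symm⟩
      · exact ⟨h ▸ hb, Or.inr h.symm⟩
  rw [e2, Finset.card_insert_of_notMem (by simp [hab]), Finset.card_singleton]

lemma deg_pos {V : Type*} [Fintype V] [DecidableEq V] {n : ℕ}
    {a b : V → Fin (n+1)} {A : Finset V} {W : Finset (Fin (n+1))}
    (hconn : ∀ S : Finset (Fin (n+1)), S ⊆ W → S.Nonempty → S ≠ W →
        ∃ x ∈ A, ¬((a x ∈ S) ↔ (b x ∈ S)))
    {v : Fin (n+1)} (hv : v ∈ W) (hW2 : 2 ≤ W.card) :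
    1 ≤ (A.filter (fun x => a x = v ∨ b x = v)).card := by
  classical
  have hne : ({v} : Finset (Fin (n+1))) ≠ W := by
    intro h
    rw [← h] at hW2
    simp at hW2
  obtain ⟨x, hxA, hx⟩ := hconn {v} (Finset.singleton_subset_iff.mpr hv)
    (Finset.singleton_nonempty v) hne
  have : x ∈ A.filter (fun x => a x = v ∨ b x = v) := by
    rw [Finset.mem_filter]
    refine ⟨hxA, ?_⟩
    by_contra hc
    push_neg at hc
    apply hx
    simp only [Finset.mem_singleton]
    constructor
    · intro h; exact absurd h hc.1
    · intro h; exact absurd h hc.2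
  exact Finset.card_pos.mpr ⟨x, this⟩

lemma exists_leaf_ne {V : Type*} [Fintype V] [DecidableEq V] {n : ℕ}
    {a b : V → Fin (n+1)} {A : Finset V} {W : Finset (Fin (n+1))} {r : Fin (n+1)} {N : ℕ}
    (hA : A.card = N) (hW : W.card = N + 1) (hr : r ∈ W) (hN : 1 ≤ N)
    (hT : ∀ x ∈ A, a x ∈ W ∧ b x ∈ W ∧ a x ≠ b x)
    (hconn : ∀ S : Finset (Fin (n+1)), S ⊆ W → S.Nonempty → S ≠ W →
        ∃ x ∈ A, ¬((a x ∈ S) ↔ (b x ∈ S)))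
    (hroot : (A.filter (fun x => a x = r ∨ b x = r)).card ≤ 1) :
    ∃ v ∈ W, v ≠ r ∧ (A.filter (fun x => a x = v ∨ b x = v)).card = 1 := by
  classical
  have hW2 : 2 ≤ W.card := by omega
  by_contra hcon
  push_neg at hcon
  have hbig : ∀ v ∈ W.erase r, 2 ≤ (A.filter (fun x => a x = v ∨ b x = v)).card := by
    intro v hv
    obtain ⟨hvr, hvW⟩ := Finset.mem_erase.mp hv
    have h1 := deg_pos hconn hvW hW2
    have h2 := hcon v hvW hvr
    omega
  have hsum := deg_sum a b A W hT
  have hrdeg := deg_pos hconn hr hW2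
  have hsplit : ∑ v ∈ W, (A.filter (fun x => a x = v ∨ b x = v)).card
      = (A.filter (fun x => a x = r ∨ b x = r)).card
        + ∑ v ∈ W.erase r, (A.filter (fun x => a x = v ∨ b x = v)).card :=
    (Finset.add_sum_erase W _ hr).symm
  have hbound : (W.erase r).card * 2 ≤ ∑ v ∈ W.erase r, (A.filter (fun x => a x = v ∨ b x = v)).card := by
    calc (W.erase r).card * 2 = ∑ _v ∈ W.erase r, 2 := by
          rw [Finset.sum_const, smul_eq_mul]
      _ ≤ _ := Finset.sum_le_sum hbig
  rw [Finset.card_erase_of_mem hr, hW] at hbound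
  rw [hsum, hA] at hsplit
  omega

lemma tree_label {V : Type*} [Fintype V] [DecidableEq V] {n : ℕ}
    (a b : V → Fin (n+1)) :
    ∀ (N : ℕ) (A : Finset V) (W : Finset (Fin (n+1))) (r : Fin (n+1)),
      A.card = N → W.card = N + 1 → r ∈ W →
      (∀ x ∈ A, a x ∈ W ∧ b x ∈ W ∧ a x ≠ b x) →
      (∀ S : Finset (Fin (n+1)), S ⊆ W → S.Nonempty → S ≠ W →
          ∃ x ∈ A, ¬((a x ∈ S) ↔ (b x ∈ S))) →
      (∀ v ∈ W, (A.filter (fun x => a x = v ∨ b x = v)).card ≤ 3) →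
      (A.filter (fun x => a x = r ∨ b x = r)).card ≤ 1 →
      ∃ lab : Fin (n+1) → ℕ,
        Set.InjOn lab W ∧ (∀ v ∈ W, lab v ≤ N) ∧ lab r = N ∧
        (∀ x ∈ A, ∀ y ∈ A,
          min (lab (a x)) (lab (b x)) = min (lab (a y)) (lab (b y)) → x = y) ∧
        (∀ x ∈ A,
          max (lab (a x)) (lab (b x)) = min (lab (a x)) (lab (b x)) + 1 ∨
          (min (lab (a x)) (lab (b x)) + 1 < max (lab (a x)) (lab (b x)) ∧
           (∃ y ∈ A, y ≠ x ∧ max (lab (a y)) (lab (b y)) = max (lab (a x)) (lab (b x)) ∧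
              min (lab (a y)) (lab (b y)) = max (lab (a x)) (lab (b x)) - 1) ∧
           (max (lab (a x)) (lab (b x)) = N ∨
            ∃ z ∈ A, min (lab (a z)) (lab (b z)) = max (lab (a x)) (lab (b x))))) ∧
        (∀ x ∈ A, ∀ y ∈ A, ∀ z ∈ A, x ≠ y → x ≠ z → y ≠ z →
          ¬(max (lab (a x)) (lab (b x)) = max (lab (a y)) (lab (b y)) ∧
            max (lab (a y)) (lab (b y)) = max (lab (a z)) (lab (b z)))) := by
  classical
  intro N
  induction N using Nat.strong_induction_on with
  | _ N IH =>
    intro A W r hA hW hr hT hconn hdeg hroot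
    rcases Nat.eq_zero_or_pos N with hN0 | hNpos
    · -- no edges at all
      subst hN0
      have hAe : A = ∅ := Finset.card_eq_zero.mp hA
      refine ⟨fun _ => 0, ?_, fun v _ => le_refl 0, rfl, ?_, ?_, ?_⟩
      · obtain ⟨v0, hv0⟩ := Finset.card_eq_one.mp hW
        intro p hp q hq _
        rw [hv0] at hp hq
        simp only [Finset.coe_singleton, Set.mem_singleton_iff] at hp hq
        rw [hp, hq]
      · intro x hx
        rw [hAe] at hx
        exact absurd hx (Finset.notMem_empty x)
      · intro x hx
        rw [hAe] at hx
        exact absurd hx (Finset.notMem_empty x)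
      · intro x hx
        rw [hAe] at hx
        exact absurd hx (Finset.notMem_empty x)
    rcases eq_or_lt_of_le (show 1 ≤ N from hNpos) with hN1 | hN2
    · -- exactly one edge
      obtain ⟨x0, hx0⟩ := Finset.card_eq_one.mp (by rw [hA, ← hN1])
      have hx0A : x0 ∈ A := by rw [hx0]; exact Finset.mem_singleton_self x0
      obtain ⟨haW, hbW, hab⟩ := hT x0 hx0A
      have hWeq : W = {a x0, b x0} := by
        have hsub : ({a x0, b x0} : Finset (Fin (n+1))) ⊆ W := by
          intro v hv
          rcases Finset.mem_insert.mp hv with h | h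
          · rw [h]; exact haW
          · rw [Finset.mem_singleton.mp h]; exact hbW
        have hcard : W.card ≤ ({a x0, b x0} : Finset (Fin (n+1))).card := by
          rw [Finset.card_insert_of_notMem (by simp [hab]), Finset.card_singleton, hW, ← hN1]
        exact (Finset.eq_of_subset_of_card_le hsub hcard).symm
      have hrx : r = a x0 ∨ r = b x0 := by
        rw [hWeq] at hr
        simpa using hr
      refine ⟨fun v => if v = r then 1 else 0, ?_, ?_, by simp [← hN1], ?_, ?_, ?_⟩
      · intro p hp q hq hpq
        rw [hWeq] at hp hq
        simp only [Finset.coe_insert, Set.mem_insert_iff, Finset.coe_singleton,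
          Set.mem_singleton_iff] at hp hq
        by_cases hpr : p = r <;> by_cases hqr : q = r
        · rw [hpr, hqr]
        · simp [hpr, hqr] at hpq
        · simp [hpr, hqr] at hpq
        · -- both different from r; both are endpoints; r is one endpoint
          rcases hrx with h | h
          · rcases hp with hp | hp <;> rcases hq with hq | hq
            · rw [hp, hq]
            · exact absurd (hp.trans h.symm) hpr
            · exact absurd (hq.trans h.symm).symm (fun hh => hqr hh.symm)
            · rw [hp, hq]
          · rcases hp with hp | hp <;> rcases hq with hq | hq
            · rw [hp, hq]
            · exact absurd (hq.trans h.symm).symm (fun hh => hqr hh.symm)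
            · exact absurd (hp.trans h.symm) hpr
            · rw [hp, hq]
      · intro v _
        by_cases h : v = r <;> simp [h] <;> omega
      · intro x hx y hy _
        rw [hx0] at hx hy
        rw [Finset.mem_singleton.mp hx, Finset.mem_singleton.mp hy]
      · intro x hx
        left
        rw [hx0] at hx
        rw [Finset.mem_singleton.mp hx]
        rcases hrx with h | h
        · have e1 : ((fun v => if v = r then 1 else 0) (a x0) : ℕ) = 1 := by simp [h]
          have e2 : ((fun v => if v = r then 1 else 0) (b x0) : ℕ) = 0 := by
            simp [h, Ne.symm hab]
          rw [e1, e2]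
          rfl
        · have e1 : ((fun v => if v = r then 1 else 0) (a x0) : ℕ) = 0 := by
            simp [h, hab]
          have e2 : ((fun v => if v = r then 1 else 0) (b x0) : ℕ) = 1 := by simp [h]
          rw [e1, e2]
          rfl
      · intro x hx y hy z hz hxy hxz hyz
        rw [hx0, Finset.mem_singleton] at hx hy
        exact absurd (hx.trans hy.symm) hxy
    · -- N ≥ 2 : the inductive step
      obtain ⟨v', hv'W, hv'r, hv'deg⟩ := exists_leaf_ne hA hW hr (by omega) hT hconn hroot
      obtain ⟨xs, hxs⟩ := Finset.card_eq_one.mp hv'deg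
      have hxsA : xs ∈ A ∧ (a xs = v' ∨ b xs = v') := by
        have hm : xs ∈ A.filter (fun x => a x = v' ∨ b x = v') := by
          rw [hxs]; exact Finset.mem_singleton_self xs
        exact Finset.mem_filter.mp hm
      obtain ⟨hav, hbv, habs⟩ := hT xs hxsA.1
      have hwdata : ∃ w, w ≠ v' ∧ w ∈ W ∧ ((a xs = v' ∧ b xs = w) ∨ (b xs = v' ∧ a xs = w)) := by
        rcases hxsA.2 with h | h
        · exact ⟨b xs, fun hh => habs (h.trans hh.symm), hbv, Or.inl ⟨h, rfl⟩⟩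
        · exact ⟨a xs, fun hh => habs (hh.trans h.symm), hav, Or.inr ⟨h, rfl⟩⟩
      obtain ⟨w, hwv, hwW, hwend⟩ := hwdata
      have hA'v : ∀ y ∈ A, y ≠ xs → a y ≠ v' ∧ b y ≠ v' := by
        intro y hy hyx
        constructor <;> intro hc
        · have hm : y ∈ A.filter (fun x => a x = v' ∨ b x = v') :=
            Finset.mem_filter.mpr ⟨hy, Or.inl hc⟩
          rw [hxs, Finset.mem_singleton] at hm
          exact hyx hm
        · have hm : y ∈ A.filter (fun x => a x = v' ∨ b x = v') :=
            Finset.mem_filter.mpr ⟨hy, Or.inr hc⟩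
          rw [hxs, Finset.mem_singleton] at hm
          exact hyx hm
      have hwr : w ≠ r := by
        intro hc
        have hxsr : xs ∈ A.filter (fun x => a x = r ∨ b x = r) := by
          refine Finset.mem_filter.mpr ⟨hxsA.1, ?_⟩
          rcases hwend with ⟨h1, h2⟩ | ⟨h1, h2⟩
          · right; rw [h2, hc]
          · left; rw [h2, hc]
        have hS2 : ({r, v'} : Finset (Fin (n+1))) ⊆ W := by
          intro t ht
          rcases Finset.mem_insert.mp ht with h | h
          · rw [h]; exact hr
          · rw [Finset.mem_singleton.mp h]; exact hv'W
        have hSne : ({r, v'} : Finset (Fin (n+1))) ≠ W := by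
          intro hEq
          have : W.card = 2 := by
            rw [← hEq, Finset.card_insert_of_notMem (by simp [Ne.symm hv'r]),
              Finset.card_singleton]
          omega
        obtain ⟨y, hyA, hy⟩ := hconn {r, v'} hS2 ⟨r, Finset.mem_insert_self r _⟩ hSne
        have hyxs : y = xs := by
          by_cases h1 : a y = r ∨ b y = r
          · have hm : y ∈ A.filter (fun x => a x = r ∨ b x = r) := Finset.mem_filter.mpr ⟨hyA, h1⟩
            exact Finset.card_le_one.mp hroot y hm xs hxsr
          · by_cases h2 : a y = v' ∨ b y = v'
            · have hm : y ∈ A.filter (fun x => a x = v' ∨ b x = v') :=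
                Finset.mem_filter.mpr ⟨hyA, h2⟩
              rw [hxs, Finset.mem_singleton] at hm
              exact hm
            · exfalso
              push_neg at h1 h2
              apply hy
              simp only [Finset.mem_insert, Finset.mem_singleton]
              constructor
              · rintro (h | h)
                · exact absurd h h1.1
                · exact absurd h h2.1
              · rintro (h | h)
                · exact absurd h h1.2
                · exact absurd h h2.2
        apply hy
        rw [hyxs]
        simp only [Finset.mem_insert, Finset.mem_singleton]
        rcases hwend with ⟨h1, h2⟩ | ⟨h1, h2⟩
        · exact ⟨fun _ => Or.inl (by rw [h2, hc]), fun _ => Or.inr h1⟩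
        · exact ⟨fun _ => Or.inr h1, fun _ => Or.inl (by rw [h2, hc])⟩
      obtain ⟨N', rfl⟩ : ∃ N', N = N' + 1 := ⟨N - 1, by omega⟩
      have hN'pos : 1 ≤ N' := by omega
      set A' := A.erase xs with hA'def
      set W' := W.erase v' with hW'def
      have hA' : A'.card = N' := by
        rw [hA'def, Finset.card_erase_of_mem hxsA.1, hA]
        omega
      have hW' : W'.card = N' + 1 := by
        rw [hW'def, Finset.card_erase_of_mem hv'W, hW]
        omega
      have hrW' : r ∈ W' := Finset.mem_erase.mpr ⟨Ne.symm hv'r, hr⟩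
      have hT' : ∀ x ∈ A', a x ∈ W' ∧ b x ∈ W' ∧ a x ≠ b x := by
        intro x hx
        obtain ⟨hxne, hxA⟩ := Finset.mem_erase.mp hx
        obtain ⟨h1, h2, h3⟩ := hT x hxA
        obtain ⟨h4, h5⟩ := hA'v x hxA hxne
        exact ⟨Finset.mem_erase.mpr ⟨h4, h1⟩, Finset.mem_erase.mpr ⟨h5, h2⟩, h3⟩
      have hconn' : ∀ S ⊆ W', S.Nonempty → S ≠ W' → ∃ x ∈ A', ¬((a x ∈ S) ↔ (b x ∈ S)) := by
        intro S hSsub hSne hSW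
        have hSW2 : S ⊆ W := hSsub.trans (Finset.erase_subset _ _)
        have hv'S : v' ∉ S := fun hc => (Finset.mem_erase.mp (hSsub hc)).1 rfl
        have hSneW : S ≠ W := fun hc => hv'S (hc ▸ hv'W)
        obtain ⟨y, hyA, hy⟩ := hconn S hSW2 hSne hSneW
        by_cases hyx : y = xs
        · have hwS : w ∈ S := by
            rcases hwend with ⟨h1, h2⟩ | ⟨h1, h2⟩
            · by_contra hcW
              apply hy
              rw [hyx]
              constructor
              · intro h; exact absurd h (by rw [h1]; exact hv'S)
              · intro h; exact absurd h (by rw [h2]; exact hcW)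
            · by_contra hcW
              apply hy
              rw [hyx]
              constructor
              · intro h; exact absurd h (by rw [h2]; exact hcW)
              · intro h; exact absurd h (by rw [h1]; exact hv'S)
          obtain ⟨t, htW', htS⟩ : ∃ t ∈ W', t ∉ S := by
            by_contra hcW
            push_neg at hcW
            exact hSW (Finset.Subset.antisymm hSsub hcW)
          have hS2sub : insert v' S ⊆ W := Finset.insert_subset hv'W hSW2
          have hS2ne : insert v' S ≠ W := by
            intro hc
            have htW : t ∈ insert v' S := by
              rw [hc]; exact Finset.mem_of_mem_erase htW'
            rcases Finset.mem_insert.mp htW with h | h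
            · exact (Finset.mem_erase.mp htW').1 h
            · exact htS h
          obtain ⟨z, hzA, hz⟩ := hconn (insert v' S) hS2sub ⟨v', Finset.mem_insert_self _ _⟩ hS2ne
          have hzxs : z ≠ xs := by
            intro hc
            apply hz
            rw [hc]
            rcases hwend with ⟨h1, h2⟩ | ⟨h1, h2⟩
            · exact ⟨fun _ => by rw [h2]; exact Finset.mem_insert_of_mem hwS,
                fun _ => by rw [h1]; exact Finset.mem_insert_self _ _⟩
            · exact ⟨fun _ => by rw [h1]; exact Finset.mem_insert_self _ _,
                fun _ => by rw [h2]; exact Finset.mem_insert_of_mem hwS⟩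
          obtain ⟨hza, hzb⟩ := hA'v z hzA hzxs
          have hmem : ∀ u : Fin (n+1), u ≠ v' → (u ∈ insert v' S ↔ u ∈ S) := by
            intro u hu
            simp [Finset.mem_insert, hu]
          refine ⟨z, Finset.mem_erase.mpr ⟨hzxs, hzA⟩, ?_⟩
          intro hc
          apply hz
          rw [hmem _ hza, hmem _ hzb]
          exact hc
        · exact ⟨y, Finset.mem_erase.mpr ⟨hyx, hyA⟩, hy⟩
      have hdeg' : ∀ v ∈ W', (A'.filter (fun x => a x = v ∨ b x = v)).card ≤ 3 := by
        intro v hv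
        exact le_trans (Finset.card_le_card
          (Finset.filter_subset_filter _ (Finset.erase_subset _ _)))
          (hdeg v (Finset.mem_of_mem_erase hv))
      have hroot' : (A'.filter (fun x => a x = r ∨ b x = r)).card ≤ 1 :=
        le_trans (Finset.card_le_card
          (Finset.filter_subset_filter _ (Finset.erase_subset _ _))) hroot
      obtain ⟨lab', hinj', hle', hlabr', hL4', hL5', hL6'⟩ :=
        IH N' (by omega) A' W' r hA' hW' hrW' hT' hconn' hdeg' hroot'
      have hwW' : w ∈ W' := Finset.mem_erase.mpr ⟨hwv, hwW⟩
      set L := lab' w with hLdef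
      have hLlt : L < N' := by
        have h1 := hle' w hwW'
        have h2 : lab' w ≠ N' := by
          intro hc
          exact hwr (hinj' (Finset.mem_coe.mpr hwW') (Finset.mem_coe.mpr hrW')
            (hc.trans hlabr'.symm))
        omega
      set sh : ℕ → ℕ := fun t => if L ≤ t then t + 1 else t with hshdef
      have hsh_eq : ∀ s t, sh s = sh t → s = t := by
        intro s t h
        simp only [hshdef] at h
        split_ifs at h <;> omega
      have hsh_le : ∀ {s t : ℕ}, s ≤ t → sh s ≤ sh t := by
        intro s t h
        simp only [hshdef]
        split_ifs <;> omega
      have hsh_ne : ∀ t, sh t ≠ L := by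
        intro t
        simp only [hshdef]
        split_ifs <;> omega
      have hsh_min : ∀ s t, min (sh s) (sh t) = sh (min s t) := by
        intro s t
        rcases le_total s t with h | h
        · rw [min_eq_left (hsh_le h), min_eq_left h]
        · rw [min_eq_right (hsh_le h), min_eq_right h]
      have hsh_max : ∀ s t, max (sh s) (sh t) = sh (max s t) := by
        intro s t
        rcases le_total s t with h | h
        · rw [max_eq_right (hsh_le h), max_eq_right h]
        · rw [max_eq_left (hsh_le h), max_eq_left h]
      have hsh_gap : ∀ s t, s + 1 < t → sh s + 1 < sh t := by
        intro s t h
        simp only [hshdef]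
        split_ifs <;> omega
      have hsh_adj : ∀ t, L ≠ t + 1 → sh (t + 1) = sh t + 1 := by
        intro t h
        simp only [hshdef]
        split_ifs <;> omega
      have hsh_pred : ∀ t, 0 < t → L ≠ t → sh (t - 1) = sh t - 1 := by
        intro t h1 h2
        simp only [hshdef]
        split_ifs <;> omega
      have hsh_top : sh N' = N' + 1 := by
        simp only [hshdef]
        split_ifs <;> omega
      have hsh_L : sh L = L + 1 := by
        simp only [hshdef]
        split_ifs <;> omega
      have hsh_eqL1 : ∀ t, sh t = L + 1 → t = L := by
        intro t h
        simp only [hshdef] at h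
        split_ifs at h <;> omega
      set lab : Fin (n+1) → ℕ := fun v => if v = v' then L else sh (lab' v) with hlabdef
      have hlab_v' : lab v' = L := by simp only [hlabdef]; simp
      have hlab_ne : ∀ v, v ≠ v' → lab v = sh (lab' v) := by
        intro v hv
        simp only [hlabdef]
        rw [if_neg hv]
      have hend' : ∀ x ∈ A', (a x ≠ v' ∧ b x ≠ v') := by
        intro x hx
        exact hA'v x (Finset.mem_of_mem_erase hx) (Finset.mem_erase.mp hx).1
      have hcmin : ∀ x ∈ A', min (lab (a x)) (lab (b x)) = sh (min (lab' (a x)) (lab' (b x))) := by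
        intro x hx
        obtain ⟨h1, h2⟩ := hend' x hx
        rw [hlab_ne _ h1, hlab_ne _ h2, hsh_min]
      have hcmax : ∀ x ∈ A', max (lab (a x)) (lab (b x)) = sh (max (lab' (a x)) (lab' (b x))) := by
        intro x hx
        obtain ⟨h1, h2⟩ := hend' x hx
        rw [hlab_ne _ h1, hlab_ne _ h2, hsh_max]
      have hlabw : lab w = L + 1 := by
        rw [hlab_ne w hwv, ← hLdef, hsh_L]
      have hminxs : min (lab (a xs)) (lab (b xs)) = L ∧ max (lab (a xs)) (lab (b xs)) = L + 1 := by
        rcases hwend with ⟨h1, h2⟩ | ⟨h1, h2⟩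
        · rw [h1, h2, hlab_v', hlabw]
          exact ⟨min_eq_left (by omega), max_eq_right (by omega)⟩
        · rw [h1, h2, hlab_v', hlabw]
          exact ⟨min_eq_right (by omega), max_eq_left (by omega)⟩
      have hWsub' : ∀ v ∈ W, v ≠ v' → v ∈ W' := fun v hv hne => Finset.mem_erase.mpr ⟨hne, hv⟩
      have hminlt : ∀ x ∈ A', min (lab' (a x)) (lab' (b x)) < max (lab' (a x)) (lab' (b x)) := by
        intro x hx
        obtain ⟨h1, h2, h3⟩ := hT' x hx
        have hne : lab' (a x) ≠ lab' (b x) :=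
          fun hc => h3 (hinj' (Finset.mem_coe.mpr h1) (Finset.mem_coe.mpr h2) hc)
        exact min_lt_max.mpr hne
      have hsurj : ∀ m, m < N' → ∃ z ∈ A', min (lab' (a z)) (lab' (b z)) = m := by
        intro m hm
        have himg : A'.image (fun z => min (lab' (a z)) (lab' (b z))) = Finset.range N' := by
          apply Finset.eq_of_subset_of_card_le
          · intro t ht
            obtain ⟨z, hz, rfl⟩ := Finset.mem_image.mp ht
            rw [Finset.mem_range]
            have h1 := hminlt z hz
            obtain ⟨hz1, hz2, _⟩ := hT' z hz
            have h2 := hle' (a z) hz1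
            have h3 := hle' (b z) hz2
            rcases max_cases (lab' (a z)) (lab' (b z)) with ⟨hc, _⟩ | ⟨hc, _⟩ <;> omega
          · rw [Finset.card_range,
              Finset.card_image_of_injOn (fun p hp q hq h => hL4' p hp q hq h), hA']
        have hmm : m ∈ Finset.range N' := Finset.mem_range.mpr hm
        rw [← himg] at hmm
        obtain ⟨z, hz, hzeq⟩ := Finset.mem_image.mp hmm
        exact ⟨z, hz, hzeq⟩
      have hmaxend : ∀ z ∈ A', ∀ vv ∈ W',
          max (lab' (a z)) (lab' (b z)) = lab' vv → (a z = vv ∨ b z = vv) := by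
        intro z hz vv hvv hmax
        obtain ⟨h1, h2, _⟩ := hT' z hz
        rcases max_cases (lab' (a z)) (lab' (b z)) with ⟨hc, _⟩ | ⟨hc, _⟩
        · left
          exact hinj' (Finset.mem_coe.mpr h1) (Finset.mem_coe.mpr hvv) (by rw [← hmax, hc])
        · right
          exact hinj' (Finset.mem_coe.mpr h2) (Finset.mem_coe.mpr hvv) (by rw [← hmax, hc])
      have hminend : ∀ z ∈ A', ∀ vv ∈ W',
          min (lab' (a z)) (lab' (b z)) = lab' vv → (a z = vv ∨ b z = vv) := by
        intro z hz vv hvv hmin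
        obtain ⟨h1, h2, _⟩ := hT' z hz
        rcases min_cases (lab' (a z)) (lab' (b z)) with ⟨hc, _⟩ | ⟨hc, _⟩
        · left
          exact hinj' (Finset.mem_coe.mpr h1) (Finset.mem_coe.mpr hvv) (by rw [← hmin, hc])
        · right
          exact hinj' (Finset.mem_coe.mpr h2) (Finset.mem_coe.mpr hvv) (by rw [← hmin, hc])
      have hcontra : ∀ e ∈ A', ∀ f ∈ A', e ≠ f →
          max (lab' (a e)) (lab' (b e)) = L → max (lab' (a f)) (lab' (b f)) = L → False := by
        intro e he f hf hef hemax hfmax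
        obtain ⟨z2, hz2, hz2min⟩ := hsurj L hLlt
        have hz2e : z2 ≠ e := by
          intro hc
          rw [hc] at hz2min
          have := hminlt e he
          omega
        have hz2f : z2 ≠ f := by
          intro hc
          rw [hc] at hz2min
          have := hminlt f hf
          omega
        have hte : a e = w ∨ b e = w := hmaxend e he w hwW' (by rw [hemax, hLdef])
        have htf : a f = w ∨ b f = w := hmaxend f hf w hwW' (by rw [hfmax, hLdef])
        have htz : a z2 = w ∨ b z2 = w := hminend z2 hz2 w hwW' (by rw [hz2min, hLdef])
        have htxs : a xs = w ∨ b xs = w := by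
          rcases hwend with ⟨h1, h2⟩ | ⟨h1, h2⟩
          · right; exact h2
          · left; exact h2
        have hexs : e ≠ xs := (Finset.mem_erase.mp he).1
        have hfxs : f ≠ xs := (Finset.mem_erase.mp hf).1
        have hzxs : z2 ≠ xs := (Finset.mem_erase.mp hz2).1
        have hsub4 : ({e, f, z2, xs} : Finset V) ⊆ A.filter (fun x => a x = w ∨ b x = w) := by
          intro t ht
          simp only [Finset.mem_insert, Finset.mem_singleton] at ht
          rcases ht with rfl | rfl | rfl | rfl
          · exact Finset.mem_filter.mpr ⟨Finset.mem_of_mem_erase he, hte⟩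
          · exact Finset.mem_filter.mpr ⟨Finset.mem_of_mem_erase hf, htf⟩
          · exact Finset.mem_filter.mpr ⟨Finset.mem_of_mem_erase hz2, htz⟩
          · exact Finset.mem_filter.mpr ⟨hxsA.1, htxs⟩
        have hc4 : ({e, f, z2, xs} : Finset V).card = 4 :=
          card_four hef (Ne.symm hz2e) hexs (Ne.symm hz2f) hfxs hzxs
        have hd3 := hdeg w hwW
        have hle4 := Finset.card_le_card hsub4
        rw [hc4] at hle4
        omega
      refine ⟨lab, ?_, ?_, ?_, ?_, ?_, ?_⟩
      · intro p hp q hq hpq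
        by_cases hpv : p = v' <;> by_cases hqv : q = v'
        · rw [hpv, hqv]
        · exfalso
          rw [hpv, hlab_v', hlab_ne q hqv] at hpq
          exact hsh_ne _ hpq.symm
        · exfalso
          rw [hqv, hlab_v', hlab_ne p hpv] at hpq
          exact hsh_ne _ hpq
        · have hp' : p ∈ W' := hWsub' p (Finset.mem_coe.mp hp) hpv
          have hq' : q ∈ W' := hWsub' q (Finset.mem_coe.mp hq) hqv
          rw [hlab_ne p hpv, hlab_ne q hqv] at hpq
          exact hinj' (Finset.mem_coe.mpr hp') (Finset.mem_coe.mpr hq') (hsh_eq _ _ hpq)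
      · intro v hv
        by_cases hvv : v = v'
        · rw [hvv, hlab_v']; omega
        · rw [hlab_ne v hvv]
          have h1 := hle' v (hWsub' v hv hvv)
          simp only [hshdef]
          split_ifs <;> omega
      · rw [hlab_ne r (Ne.symm hv'r), hlabr', hsh_top]
      · intro x hx y hy hmin
        by_cases hxx : x = xs <;> by_cases hyy : y = xs
        · rw [hxx, hyy]
        · exfalso
          have hy' : y ∈ A' := Finset.mem_erase.mpr ⟨hyy, hy⟩
          rw [hxx, hminxs.1, hcmin y hy'] at hmin
          exact hsh_ne _ hmin.symm
        · exfalso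
          have hx' : x ∈ A' := Finset.mem_erase.mpr ⟨hxx, hx⟩
          rw [hyy, hminxs.1, hcmin x hx'] at hmin
          exact hsh_ne _ hmin
        · have hx' : x ∈ A' := Finset.mem_erase.mpr ⟨hxx, hx⟩
          have hy' : y ∈ A' := Finset.mem_erase.mpr ⟨hyy, hy⟩
          rw [hcmin x hx', hcmin y hy'] at hmin
          exact hL4' x hx' y hy' (hsh_eq _ _ hmin)
      · intro x hx
        by_cases hxx : x = xs
        · left
          rw [hxx, hminxs.1, hminxs.2]
        · have hx' : x ∈ A' := Finset.mem_erase.mpr ⟨hxx, hx⟩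
          rcases hL5' x hx' with hflat | ⟨hlt, ⟨y, hyA', hyx, hymax, hymin⟩, hthird⟩
          · by_cases hsplit : L = min (lab' (a x)) (lab' (b x)) + 1
            · right
              have hshcm : sh (min (lab' (a x)) (lab' (b x))) = min (lab' (a x)) (lab' (b x)) := by
                simp only [hshdef]
                split_ifs <;> omega
              have hshcm1 : sh (min (lab' (a x)) (lab' (b x)) + 1)
                  = min (lab' (a x)) (lab' (b x)) + 2 := by
                simp only [hshdef]
                split_ifs <;> omega
              rw [hcmin x hx', hcmax x hx', hflat, hshcm, hshcm1]
              refine ⟨by omega, ⟨xs, hxsA.1, Ne.symm hxx, ?_, ?_⟩, ?_⟩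
              · rw [hminxs.2]; omega
              · rw [hminxs.1]; omega
              · right
                obtain ⟨z, hz, hzmin⟩ := hsurj L hLlt
                refine ⟨z, Finset.mem_of_mem_erase hz, ?_⟩
                rw [hcmin z hz, hzmin, hsh_L]
                omega
            · left
              rw [hcmin x hx', hcmax x hx', hflat, hsh_adj _ hsplit]
          · have hnot : L ≠ max (lab' (a x)) (lab' (b x)) := by
              intro hc
              exact hcontra x hx' y hyA' (Ne.symm hyx) hc.symm (by rw [hymax, ← hc])
            right
            rw [hcmin x hx', hcmax x hx']
            refine ⟨hsh_gap _ _ hlt, ⟨y, Finset.mem_of_mem_erase hyA', hyx, ?_, ?_⟩, ?_⟩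
            · rw [hcmax y hyA', hymax]
            · rw [hcmin y hyA', hymin, hsh_pred _ (by omega) hnot]
            · rcases hthird with htop | ⟨z, hzA', hzmin⟩
              · left; rw [htop, hsh_top]
              · right
                exact ⟨z, Finset.mem_of_mem_erase hzA', by rw [hcmin z hzA', hzmin]⟩
      · rintro x hx y hy z hz hxy hxz hyz ⟨he1, he2⟩
        by_cases hxx : x = xs
        · have hy' : y ∈ A' := Finset.mem_erase.mpr ⟨fun hc => hxy (hxx.trans hc.symm), hy⟩
          have hz' : z ∈ A' := Finset.mem_erase.mpr ⟨fun hc => hxz (hxx.trans hc.symm), hz⟩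
          have hy1 : max (lab' (a y)) (lab' (b y)) = L := by
            rw [hxx, hminxs.2, hcmax y hy'] at he1
            exact hsh_eqL1 _ he1.symm
          have hz1 : max (lab' (a z)) (lab' (b z)) = L := by
            rw [hcmax y hy', hcmax z hz'] at he2
            rw [← hsh_eq _ _ he2]
            exact hy1
          exact hcontra y hy' z hz' hyz hy1 hz1
        by_cases hyy : y = xs
        · have hx' : x ∈ A' := Finset.mem_erase.mpr ⟨hxx, hx⟩
          have hz' : z ∈ A' := Finset.mem_erase.mpr ⟨fun hc => hyz (hyy.trans hc.symm), hz⟩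
          have hx1 : max (lab' (a x)) (lab' (b x)) = L := by
            rw [hyy, hminxs.2, hcmax x hx'] at he1
            exact hsh_eqL1 _ he1
          have hz1 : max (lab' (a z)) (lab' (b z)) = L := by
            rw [hyy, hminxs.2, hcmax z hz'] at he2
            exact hsh_eqL1 _ he2.symm
          exact hcontra x hx' z hz' hxz hx1 hz1
        by_cases hzz : z = xs
        · have hx' : x ∈ A' := Finset.mem_erase.mpr ⟨hxx, hx⟩
          have hy' : y ∈ A' := Finset.mem_erase.mpr ⟨hyy, hy⟩
          have hy1 : max (lab' (a y)) (lab' (b y)) = L := by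
            rw [hzz, hminxs.2, hcmax y hy'] at he2
            exact hsh_eqL1 _ he2
          have hx1 : max (lab' (a x)) (lab' (b x)) = L := by
            rw [hcmax x hx', hcmax y hy'] at he1
            rw [hsh_eq _ _ he1]
            exact hy1
          exact hcontra x hx' y hy' hxy hx1 hy1
        · have hx' : x ∈ A' := Finset.mem_erase.mpr ⟨hxx, hx⟩
          have hy' : y ∈ A' := Finset.mem_erase.mpr ⟨hyy, hy⟩
          have hz' : z ∈ A' := Finset.mem_erase.mpr ⟨hzz, hz⟩
          rw [hcmax x hx', hcmax y hy'] at he1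
          rw [hcmax y hy', hcmax z hz'] at he2
          exact hL6' x hx' y hy' z hz' hxy hxz hyz ⟨hsh_eq _ _ he1, hsh_eq _ _ he2⟩

lemma inv_mutSeq {V : Type*} [Fintype V] [DecidableEq V] {n : ℕ} {B : V → V → ℤ}
    (h : Inv n B) (l : List V) : Inv n (mutSeq B l) := by
  induction l generalizing B with
  | nil => exact h
  | cons k l IH =>
    have e : mutSeq B (k :: l) = mutSeq (mutQ B k) l := rfl
    rw [e]
    exact IH (inv_mutQ h k)

lemma inv_transport {V : Type*} [Fintype V] [DecidableEq V] {n : ℕ}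
    (M : Fin n → Fin n → ℤ) (hM : Inv n M) (e : V ≃ Fin n) (B : V → V → ℤ)
    (hB : ∀ x y, B x y = M (e x) (e y)) : Inv n B := by
  obtain ⟨a, b, h1, h2, h3, h4, h5, h6, h7⟩ := hM
  refine ⟨fun x => a (e x), fun x => b (e x), fun x => h1 (e x), ?_, ?_, ?_, ?_, ?_, ?_⟩
  · exact h2.comp e e.injective
  · intro x y hxy
    have hxy' : e x ≠ e y := fun h => hxy (e.injective h)
    have h3' := h3 (e x) (e y) hxy'
    constructor
    · intro hs
      rw [hB]
      apply h3'.1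
      obtain ⟨v, t1, t2⟩ := hs
      exact ⟨v, t1, t2⟩
    · intro hs
      rw [hB]
      apply h3'.2
      intro h
      apply hs
      obtain ⟨v, t1, t2⟩ := h
      exact ⟨v, t1, t2⟩
  · intro x y; rw [hB, hB]; exact h4 (e x) (e y)
  · intro S hS1 hS2
    obtain ⟨i, hi⟩ := h5 S hS1 hS2
    refine ⟨e.symm i, ?_⟩
    simpa using hi
  · intro v s hs
    have := h6 v (s.image e) ?_
    · rwa [Finset.card_image_of_injective s e.injective] at this
    · intro i hi
      obtain ⟨x, hx, rfl⟩ := Finset.mem_image.mp hi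
      exact hs x hx
  · intro x y z hxy hxz hyz v tx ty tz
    have h7' := h7 (e x) (e y) (e z) (fun h => hxy (e.injective h)) (fun h => hxz (e.injective h))
      (fun h => hyz (e.injective h)) v tx ty tz
    rcases h7' with ⟨c1, c2, c3⟩ | ⟨c1, c2, c3⟩
    · left
      exact ⟨by rw [hB]; exact c1, by rw [hB]; exact c2, by rw [hB]; exact c3⟩
    · right
      exact ⟨by rw [hB]; exact c1, by rw [hB]; exact c2, by rw [hB]; exact c3⟩

lemma inv_of_mutType {V : Type*} [Fintype V] [DecidableEq V] (n : ℕ) (B : V → V → ℤ)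
    (hB : IsMutTypeA n B) : Inv n B := by
  obtain ⟨e, O, l, hO, heq⟩ := hB
  exact inv_transport (mutSeq O l) (inv_mutSeq (inv_base O hO) l) e B heq

end CBAux

/-- Every quiver `B` of mutation type `A_n` admits a bijective labelling of its
vertices by `1, …, n` (here `ℓ x` has 1-based label `(ℓ x).val + 1`) such that (i)
every vertex is the vertex of smallest label of at most one oriented 3-cycle, and
(ii) the family assigning to the vertex labelled `i` the root
`β_i = α_i + ⋯ + α_j` (if `i` is the smallest and `j` the second-smallest label of
the vertices of an oriented 3-cycle) and `β_i = α_i` otherwise, is a companion basis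
for `B` in the root system of type `A_n`. -/
theorem exists_labelling_companionBasis_typeA
    {Γ₀ : Type*} [Fintype Γ₀] [DecidableEq Γ₀]
    (n : ℕ) (B : Γ₀ → Γ₀ → ℤ) (hB : IsMutTypeA n B) :
    ∃ ℓ : Γ₀ ≃ Fin n,
      (∀ x y z y' z', Cyc3 B x y z → Cyc3 B x y' z' →
        (ℓ x).val < (ℓ y).val → (ℓ x).val < (ℓ z).val →
        (ℓ x).val < (ℓ y').val → (ℓ x).val < (ℓ z').val →
        (y = y' ∧ z = z') ∨ (y = z' ∧ z = y')) ∧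
      ∃ β : ℕ → (Fin (n + 1) → ℝ),
        (∀ x y z, Cyc3 B x y z → (ℓ x).val < (ℓ y).val → (ℓ x).val < (ℓ z).val →
          β ((ℓ x).val + 1) =
            ∑ t ∈ Finset.Icc ((ℓ x).val + 1) (min ((ℓ y).val + 1) ((ℓ z).val + 1)),
              alA n t) ∧
        (∀ x, (¬ ∃ y z, Cyc3 B x y z ∧ (ℓ x).val < (ℓ y).val ∧ (ℓ x).val < (ℓ z).val) →
          β ((ℓ x).val + 1) = alA n ((ℓ x).val + 1)) ∧
        IsCompanionBasisA n B (fun v => β ((ℓ v).val + 1)) := by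
  classical
  have hInv := CBAux.inv_of_mutType n B hB
  obtain ⟨e0, _, _, _, _⟩ := hB
  have hcard : Fintype.card Γ₀ = n := by
    rw [Fintype.card_congr e0, Fintype.card_fin]
  rcases Nat.eq_zero_or_pos n with hn0 | hnpos
  · -- empty case
    subst hn0
    have hempty : IsEmpty Γ₀ := Fintype.card_eq_zero_iff.mp hcard
    refine ⟨e0, fun x => (hempty.false x).elim, fun m => alA 0 m, ?_, ?_, ?_, ?_, ?_, ?_⟩
    · intro x; exact (hempty.false x).elim
    · intro x; exact (hempty.false x).elim
    · intro x; exact (hempty.false x).elim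
    · exact linearIndependent_empty_type
    · have h1 : Set.range (fun v : Γ₀ => alA 0 ((e0 v).val + 1)) = ∅ := Set.range_eq_empty _
      have h2 : PhiA 0 = ∅ := by
        ext v
        simp only [PhiA, Set.mem_setOf_eq, Set.mem_empty_iff_false, iff_false]
        rintro ⟨i, j, hi1, hi2, hj1, hj2, hij, _⟩
        omega
      rw [h1, h2]
    · intro x; exact (hempty.false x).elim
  -- main case
  obtain ⟨a, b, h1, h2, h3, h4, h5, h6, h7⟩ := hInv
  have hdiag : ∀ x, B x x = 0 := fun x => by have := h4 x x; omega
  have hBneq : ∀ p q : Γ₀, 0 < B p q → p ≠ q := by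
    intro p q h hc
    rw [hc, hdiag] at h
    omega
  have hAcard : (Finset.univ : Finset Γ₀).card = n := by rw [Finset.card_univ, hcard]
  have hWcard : (Finset.univ : Finset (Fin (n+1))).card = n + 1 := by
    rw [Finset.card_univ, Fintype.card_fin]
  have hT : ∀ x ∈ (Finset.univ : Finset Γ₀),
      a x ∈ (Finset.univ : Finset (Fin (n+1))) ∧ b x ∈ (Finset.univ : Finset (Fin (n+1))) ∧ a x ≠ b x :=
    fun x _ => ⟨Finset.mem_univ _, Finset.mem_univ _, h1 x⟩
  have hconn : ∀ S ⊆ (Finset.univ : Finset (Fin (n+1))), S.Nonempty → S ≠ Finset.univ →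
      ∃ x ∈ (Finset.univ : Finset Γ₀), ¬((a x ∈ S) ↔ (b x ∈ S)) := by
    intro S _ hS1 hS2
    obtain ⟨x, hx⟩ := h5 S hS1 hS2
    exact ⟨x, Finset.mem_univ x, hx⟩
  have hdeg : ∀ v ∈ (Finset.univ : Finset (Fin (n+1))),
      ((Finset.univ : Finset Γ₀).filter (fun x => a x = v ∨ b x = v)).card ≤ 3 := by
    intro v _
    exact h6 v _ (fun x hx => (Finset.mem_filter.mp hx).2)
  -- find a leaf to use as root
  obtain ⟨r, hrdeg⟩ : ∃ r : Fin (n+1),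
      ((Finset.univ : Finset Γ₀).filter (fun x => a x = r ∨ b x = r)).card = 1 := by
    by_contra hcon
    push_neg at hcon
    have hbig : ∀ v ∈ (Finset.univ : Finset (Fin (n+1))),
        2 ≤ ((Finset.univ : Finset Γ₀).filter (fun x => a x = v ∨ b x = v)).card := by
      intro v hv
      have hp := CBAux.deg_pos hconn hv (by omega)
      have hne := hcon v
      omega
    have hsum := CBAux.deg_sum a b Finset.univ Finset.univ hT
    have hbd : (Finset.univ : Finset (Fin (n+1))).card * 2
        ≤ ∑ v ∈ (Finset.univ : Finset (Fin (n+1))),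
            ((Finset.univ : Finset Γ₀).filter (fun x => a x = v ∨ b x = v)).card := by
      calc (Finset.univ : Finset (Fin (n+1))).card * 2
          = ∑ _v ∈ (Finset.univ : Finset (Fin (n+1))), 2 := by
            rw [Finset.sum_const, smul_eq_mul]
        _ ≤ _ := Finset.sum_le_sum hbig
    rw [hWcard] at hbd
    rw [hsum, hAcard] at hbd
    omega
  obtain ⟨lab, hinj, hle, hlabr, hL4, hL5, hL6⟩ :=
    CBAux.tree_label a b n Finset.univ Finset.univ r hAcard hWcard (Finset.mem_univ r)
      hT hconn hdeg (le_of_eq hrdeg)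
  set cmi : Γ₀ → ℕ := fun x => min (lab (a x)) (lab (b x)) with hcmidef
  set cma : Γ₀ → ℕ := fun x => max (lab (a x)) (lab (b x)) with hcmadef
  have hlabinj : ∀ p q : Fin (n+1), lab p = lab q → p = q := by
    intro p q h
    exact hinj (Finset.mem_coe.mpr (Finset.mem_univ p)) (Finset.mem_coe.mpr (Finset.mem_univ q)) h
  have hcmlt : ∀ x, cmi x < cma x := by
    intro x
    have hne : lab (a x) ≠ lab (b x) := fun hc => h1 x (hlabinj _ _ hc)
    exact min_lt_max.mpr hne
  have hcma_le : ∀ x, cma x ≤ n := by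
    intro x
    have ha := hle (a x) (Finset.mem_univ _)
    have hb := hle (b x) (Finset.mem_univ _)
    rw [hcmadef]
    exact max_le ha hb
  have hcmi_lt : ∀ x, cmi x < n := fun x => lt_of_lt_of_le (hcmlt x) (hcma_le x)
  have hcmiinj : Function.Injective cmi := fun p q h => hL4 p (Finset.mem_univ p) q (Finset.mem_univ q) h
  have hL5c : ∀ x : Γ₀, cma x = cmi x + 1 ∨
      (cmi x + 1 < cma x ∧ (∃ y, y ≠ x ∧ cma y = cma x ∧ cmi y = cma x - 1) ∧
        (cma x = n ∨ ∃ z, cmi z = cma x)) := by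
    intro x
    rcases hL5 x (Finset.mem_univ x) with h | ⟨ha1, ⟨y, _, hy1, hy2, hy3⟩, ha3⟩
    · exact Or.inl h
    · refine Or.inr ⟨ha1, ⟨y, hy1, hy2, hy3⟩, ?_⟩
      rcases ha3 with h | ⟨z, _, hz⟩
      · exact Or.inl h
      · exact Or.inr ⟨z, hz⟩
  have hL6c : ∀ x y z : Γ₀, x ≠ y → x ≠ z → y ≠ z →
      ¬(cma x = cma y ∧ cma y = cma z) :=
    fun x y z hxy hxz hyz h =>
      hL6 x (Finset.mem_univ x) y (Finset.mem_univ y) z (Finset.mem_univ z) hxy hxz hyz h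
  -- the labelling equivalence
  have hbij : Function.Bijective (fun x : Γ₀ => (⟨cmi x, hcmi_lt x⟩ : Fin n)) := by
    rw [Fintype.bijective_iff_injective_and_card]
    constructor
    · intro p q h
      exact hcmiinj (by simpa [Fin.ext_iff] using h)
    · rw [hcard, Fintype.card_fin]
  set ℓ : Γ₀ ≃ Fin n := Equiv.ofBijective _ hbij with hℓdef
  have hℓval : ∀ x, (ℓ x).val = cmi x := fun x => rfl
  -- the attainment of min and max
  have hattain : ∀ x, (lab (a x) = cmi x ∧ lab (b x) = cma x) ∨
      (lab (a x) = cma x ∧ lab (b x) = cmi x) := by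
    intro x
    rcases le_total (lab (a x)) (lab (b x)) with h | h
    · left
      exact ⟨(min_eq_left h).symm, (max_eq_right h).symm⟩
    · right
      exact ⟨(max_eq_left h).symm, (min_eq_right h).symm⟩
  have hend : ∀ (x : Γ₀) (m : ℕ), (m = cmi x ∨ m = cma x) →
      ∃ v, (a x = v ∨ b x = v) ∧ lab v = m := by
    intro x m hm
    rcases hattain x with ⟨p1, p2⟩ | ⟨p1, p2⟩ <;> rcases hm with rfl | rfl
    · exact ⟨a x, Or.inl rfl, p1⟩
    · exact ⟨b x, Or.inr rfl, p2⟩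
    · exact ⟨b x, Or.inr rfl, p2⟩
    · exact ⟨a x, Or.inl rfl, p1⟩
  have hlabin : ∀ (x : Γ₀) (v : Fin (n+1)), (a x = v ∨ b x = v) →
      (lab v = cmi x ∨ lab v = cma x) := by
    intro x v hv
    rcases hv with rfl | rfl
    · rcases hattain x with ⟨p1, _⟩ | ⟨p1, _⟩
      · exact Or.inl p1
      · exact Or.inr p1
    · rcases hattain x with ⟨_, p2⟩ | ⟨_, p2⟩
      · exact Or.inr p2
      · exact Or.inl p2
  have hsh_iff : ∀ x y : Γ₀, (CBAux.Shares a b x y ↔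
      (cmi x = cmi y ∨ cmi x = cma y ∨ cma x = cmi y ∨ cma x = cma y)) := by
    intro x y
    constructor
    · rintro ⟨v, t1, t2⟩
      rcases hlabin x v t1 with h | h <;> rcases hlabin y v t2 with h' | h'
      · exact Or.inl (h.symm.trans h')
      · exact Or.inr (Or.inl (h.symm.trans h'))
      · exact Or.inr (Or.inr (Or.inl (h.symm.trans h')))
      · exact Or.inr (Or.inr (Or.inr (h.symm.trans h')))
    · intro hor
      have hkey : ∀ m : ℕ, (m = cmi x ∨ m = cma x) → (m = cmi y ∨ m = cma y) →
          CBAux.Shares a b x y := by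
        intro m hmx hmy
        obtain ⟨v1, hv1, hl1⟩ := hend x m hmx
        obtain ⟨v2, hv2, hl2⟩ := hend y m hmy
        have : v1 = v2 := hlabinj _ _ (hl1.trans hl2.symm)
        exact ⟨v1, hv1, this ▸ hv2⟩
      rcases hor with h | h | h | h
      · exact hkey (cmi x) (Or.inl rfl) (Or.inl h)
      · exact hkey (cmi x) (Or.inl rfl) (Or.inr h)
      · exact hkey (cma x) (Or.inr rfl) (Or.inl h)
      · exact hkey (cma x) (Or.inr rfl) (Or.inr h)
  -- neighbours of a vertex, labelled larger
  have hnb : ∀ x y : Γ₀, x ≠ y → B x y ≠ 0 → cmi x < cmi y →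
      (cmi y = cma x ∨ cma y = cma x) := by
    intro x y hxy hB0 hlt
    have hsh : CBAux.Shares a b x y := by
      by_contra hc
      exact hB0 ((h3 x y hxy).2 hc)
    rcases (hsh_iff x y).mp hsh with h | h | h | h
    · omega
    · have := hcmlt y
      omega
    · exact Or.inl h.symm
    · exact Or.inr h.symm
  -- structure of an oriented cycle with smallest label at x
  have hcyc_data : ∀ x y z : Γ₀, Cyc3 B x y z → cmi x < cmi y → cmi x < cmi z →
      cmi x + 1 < cma x ∧
      ((cmi y = cma x ∧ cma z = cma x ∧ cmi z = cma x - 1) ∨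
       (cma y = cma x ∧ cmi y = cma x - 1 ∧ cmi z = cma x)) := by
    intro x y z hC hlty hltz
    obtain ⟨hc1, hc2, hc3⟩ := hC
    have hxy : x ≠ y := hBneq x y hc1
    have hyz : y ≠ z := hBneq y z hc2
    have hxz : x ≠ z := fun hc => (hBneq z x hc3) hc.symm
    have hny := hnb x y hxy (by omega) hlty
    have hnz := hnb x z hxz (by have := h4 z x; omega) hltz
    -- the sibling: x is in the deep case of the structure condition
    have hdeep : cmi x + 1 < cma x ∧
        ∃ y0, y0 ≠ x ∧ cma y0 = cma x ∧ cmi y0 = cma x - 1 := by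
      rcases hL5c x with hflat | ⟨hlt2, ⟨y0, hy0x, hy0max, hy0min⟩, _⟩
      · -- flat case is impossible: the neighbour with cma = cma x would have smaller label
        exfalso
        have hbad : ∀ t : Γ₀, t ≠ x → cmi x < cmi t → cma t = cma x → False := by
          intro t htx hlt3 hcmat
          have := hcmlt t
          have hne : cmi t ≠ cmi x := by omega
          omega
        rcases hny with h | h
        · rcases hnz with h' | h'
          · exact hyz (hcmiinj (h.trans h'.symm))
          · exact hbad z (Ne.symm hxz) hltz h'
        · exact hbad y (Ne.symm hxy) hlty h
      · exact ⟨hlt2, y0, hy0x, hy0max, hy0min⟩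
    obtain ⟨hlt2, y0, hy0x, hy0max, hy0min⟩ := hdeep
    refine ⟨hlt2, ?_⟩
    rcases hny with h | h
    · -- y is the parent edge, z must be the sibling y0
      left
      rcases hnz with h' | h'
      · exact absurd (hcmiinj (h.trans h'.symm)) hyz
      · -- cma z = cma x : z = y0 by no-three-same-max
        have hzy0 : z = y0 := by
          by_contra hc
          have hzx : z ≠ x := hxz.symm
          exact hL6c z y0 x hc hzx hy0x ⟨h'.trans hy0max.symm, hy0max⟩
        exact ⟨h, h', by rw [hzy0, hy0min]⟩
    · right
      have hyy0 : y = y0 := by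
        by_contra hc
        exact hL6c y y0 x hc (Ne.symm hxy) hy0x ⟨h.trans hy0max.symm, hy0max⟩
      rcases hnz with h' | h'
      · exact ⟨h, by rw [hyy0, hy0min], h'⟩
      · exfalso
        exact hL6c y z x hyz (Ne.symm hxy) (Ne.symm hxz) ⟨h.trans h'.symm, h'⟩
  -- the function β
  set β : ℕ → (Fin (n+1) → ℝ) := fun m =>
    if h : ∃ x : Γ₀, cmi x + 1 = m then
      eVec (n+1) m - eVec (n+1) (cma (Classical.choose h) + 1)
    else alA n m with hβdef
  have hβ : ∀ x : Γ₀, β (cmi x + 1) = eVec (n+1) (cmi x + 1) - eVec (n+1) (cma x + 1) := by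
    intro x
    have hex : ∃ t : Γ₀, cmi t + 1 = cmi x + 1 := ⟨x, rfl⟩
    have hch : Classical.choose hex = x := by
      have := Classical.choose_spec hex
      exact hcmiinj (by omega)
    rw [hβdef]
    simp only []
    rw [dif_pos hex, hch]
  have hsurj2 : ∀ m, m < n → ∃ x : Γ₀, cmi x = m := by
    intro m hm
    have himg : (Finset.univ : Finset Γ₀).image cmi = Finset.range n := by
      apply Finset.eq_of_subset_of_card_le
      · intro t ht
        obtain ⟨z, _, rfl⟩ := Finset.mem_image.mp ht
        exact Finset.mem_range.mpr (hcmi_lt z)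
      · rw [Finset.card_range, Finset.card_image_of_injective _ hcmiinj, hAcard]
    have hmm : m ∈ Finset.range n := Finset.mem_range.mpr hm
    rw [← himg] at hmm
    obtain ⟨z, _, hzeq⟩ := Finset.mem_image.mp hmm
    exact ⟨z, hzeq⟩
  have hfam : (fun v : Γ₀ => β ((ℓ v).val + 1))
      = fun v => eVec (n+1) (cmi v + 1) - eVec (n+1) (cma v + 1) := by
    funext v
    exact hβ v
  refine ⟨ℓ, ?_, β, ?_, ?_, ?_, ?_, ?_, ?_⟩
  · -- at most one oriented cycle with smallest label at x
    intro x y z y' z' hC hC' hy hz hy' hz'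
    obtain ⟨_, hd⟩ := hcyc_data x y z hC hy hz
    obtain ⟨_, hd'⟩ := hcyc_data x y' z' hC' hy' hz'
    rcases hd with ⟨e1, _, e3⟩ | ⟨_, e2, e3⟩ <;> rcases hd' with ⟨f1, f2, f3⟩ | ⟨f1, f2, f3⟩
    · exact Or.inl ⟨hcmiinj (e1.trans f1.symm), hcmiinj (e3.trans f3.symm)⟩
    · exact Or.inr ⟨hcmiinj (e1.trans f3.symm), hcmiinj (e3.trans f2.symm)⟩
    · exact Or.inr ⟨hcmiinj (e2.trans f3.symm), hcmiinj (e3.trans f1.symm)⟩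
    · exact Or.inl ⟨hcmiinj (e2.trans f2.symm), hcmiinj (e3.trans f3.symm)⟩
  · -- value of β on cycle minima
    intro x y z hC hy hz
    obtain ⟨hlt2, hd⟩ := hcyc_data x y z hC hy hz
    show β (cmi x + 1) = ∑ t ∈ Finset.Icc (cmi x + 1) (min (cmi y + 1) (cmi z + 1)), alA n t
    have hminv : min (cmi y + 1) (cmi z + 1) = cma x := by
      rcases hd with ⟨e1, _, e3⟩ | ⟨_, e2, e3⟩
      · rw [e1, e3]
        have h9 : cma x - 1 + 1 = cma x := by omega
        rw [h9]
        exact min_eq_right (by omega)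
      · rw [e2, e3]
        have h9 : cma x - 1 + 1 = cma x := by omega
        rw [h9]
        exact min_eq_left (by omega)
    rw [hminv, hβ x, ← Finset.Ico_add_one_right_eq_Icc, CBAux.tele n (cmi x + 1) (cma x + 1) (by omega)]
  · -- value of β elsewhere
    intro x hnc
    show β (cmi x + 1) = alA n (cmi x + 1)
    have hflat : cma x = cmi x + 1 := by
      rcases hL5c x with h | ⟨hlt2, ⟨y0, hy0x, hy0max, hy0min⟩, hthird⟩
      · exact h
      exfalso
      rcases hthird with htop | ⟨z0, hz0⟩
      · obtain ⟨vx, hvx, hlx⟩ := hend x (cma x) (Or.inr rfl)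
        obtain ⟨vy, hvy, hly⟩ := hend y0 (cma y0) (Or.inr rfl)
        have hvxr : vx = r := hlabinj _ _ (by rw [hlx, htop, hlabr])
        have hvyr : vy = r := hlabinj _ _ (by rw [hly, hy0max, htop, hlabr])
        have hx_mem : x ∈ Finset.univ.filter (fun t : Γ₀ => a t = r ∨ b t = r) :=
          Finset.mem_filter.mpr ⟨Finset.mem_univ x, by rw [← hvxr]; exact hvx⟩
        have hy_mem : y0 ∈ Finset.univ.filter (fun t : Γ₀ => a t = r ∨ b t = r) :=
          Finset.mem_filter.mpr ⟨Finset.mem_univ y0, by rw [← hvyr]; exact hvy⟩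
        have hxy0 := Finset.card_le_one.mp (le_of_eq hrdeg) x hx_mem y0 hy_mem
        rw [← hxy0] at hy0min
        omega
      · apply hnc
        obtain ⟨vx, hvx, hlx⟩ := hend x (cma x) (Or.inr rfl)
        obtain ⟨vy, hvy, hly⟩ := hend y0 (cma x) (Or.inr hy0max.symm)
        obtain ⟨vz, hvz, hlz⟩ := hend z0 (cma x) (Or.inl hz0.symm)
        have hvyx : vy = vx := hlabinj _ _ (hly.trans hlx.symm)
        have hvzx : vz = vx := hlabinj _ _ (hlz.trans hlx.symm)
        have hxy0 : x ≠ y0 := fun hc => by rw [← hc] at hy0min; omega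
        have hxz0 : x ≠ z0 := fun hc => by
          rw [← hc] at hz0
          have := hcmlt x
          omega
        have hy0z0 : y0 ≠ z0 := fun hc => by rw [hc] at hy0min; omega
        have h7' := h7 x y0 z0 hxy0 hxz0 hy0z0 vx hvx (hvyx ▸ hvy) (hvzx ▸ hvz)
        rcases h7' with hc | hc
        · exact ⟨y0, z0, hc, by show cmi x < cmi y0; omega, by show cmi x < cmi z0; omega⟩
        · exact ⟨z0, y0, hc, by show cmi x < cmi z0; omega, by show cmi x < cmi y0; omega⟩
    rw [hβ x, hflat]
    rfl
  · -- membership in the root system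
    intro v
    show β (cmi v + 1) ∈ PhiA n
    rw [hβ v]
    refine ⟨cmi v + 1, cma v + 1, by omega, ?_, by omega, ?_, ?_, rfl⟩
    · have := hcmi_lt v; omega
    · have := hcma_le v; omega
    · have := hcmlt v; omega
  · -- linear independence
    rw [hfam]
    exact CBAux.triang_indep cmi cma hcmlt hcma_le hcmiinj
  · -- spanning
    rw [hfam]
    apply le_antisymm
    · apply Submodule.span_le.mpr
      rintro φ ⟨v, rfl⟩
      refine Submodule.subset_span ⟨cmi v + 1, cma v + 1, by omega, ?_, by omega, ?_, ?_, rfl⟩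
      · have := hcmi_lt v; omega
      · have := hcma_le v; omega
      · have := hcmlt v; omega
    · apply Submodule.span_le.mpr
      intro φ hφ
      obtain ⟨i, j, hi1, hi2, hj1, hj2, hij, rfl⟩ := hφ
      have halpha : ∀ k m, 1 ≤ m → m ≤ n → n - m ≤ k →
          alA n m ∈ Submodule.span ℤ
            (Set.range (fun v : Γ₀ => eVec (n+1) (cmi v + 1) - eVec (n+1) (cma v + 1))) := by
        intro k
        induction k with
        | zero =>
          intro m hm1 hm2 hm3
          have hmn : m = n := by omega
          obtain ⟨x, hx⟩ := hsurj2 (m - 1) (by omega)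
          have hcmax : cma x = m := by
            have h1' := hcma_le x
            have h2' := hcmlt x
            omega
          refine Submodule.subset_span ⟨x, ?_⟩
          show eVec (n+1) (cmi x + 1) - eVec (n+1) (cma x + 1) = alA n m
          rw [show cmi x + 1 = m from by omega, hcmax]
          rfl
        | succ k IHk =>
          intro m hm1 hm2 hm3
          obtain ⟨x, hx⟩ := hsurj2 (m - 1) (by omega)
          have hcx : cmi x + 1 = m := by omega
          have hcmax1 := hcma_le x
          have hcmax2 : m ≤ cma x := by
            have := hcmlt x
            omega
          have hγ : (eVec (n+1) (cmi x + 1) - eVec (n+1) (cma x + 1)) ∈ Submodule.span ℤ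
              (Set.range (fun v : Γ₀ => eVec (n+1) (cmi v + 1) - eVec (n+1) (cma v + 1))) :=
            Submodule.subset_span ⟨x, rfl⟩
          have hsummem : (∑ t ∈ Finset.Ico (m+1) (cma x + 1), alA n t) ∈ Submodule.span ℤ
              (Set.range (fun v : Γ₀ => eVec (n+1) (cmi v + 1) - eVec (n+1) (cma v + 1))) := by
            apply Submodule.sum_mem
            intro t ht
            obtain ⟨ht1, ht2⟩ := Finset.mem_Ico.mp ht
            exact IHk t (by omega) (by omega) (by omega)
          have hiden : alA n m = (eVec (n+1) (cmi x + 1) - eVec (n+1) (cma x + 1))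
              - (∑ t ∈ Finset.Ico (m+1) (cma x + 1), alA n t) := by
            rw [CBAux.tele n (m+1) (cma x + 1) (by omega), hcx]
            funext t
            simp only [alA, eVec, Pi.sub_apply]
            ring
          rw [hiden]
          exact Submodule.sub_mem _ hγ hsummem
      rcases lt_or_gt_of_ne hij with hij' | hij'
      · rw [show eVec (n+1) i - eVec (n+1) j = ∑ t ∈ Finset.Ico i j, alA n t from
          (CBAux.tele n i j (le_of_lt hij')).symm]
        apply Submodule.sum_mem
        intro t ht
        obtain ⟨ht1, ht2⟩ := Finset.mem_Ico.mp ht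
        exact halpha n t (by omega) (by omega) (by omega)
      · rw [show eVec (n+1) i - eVec (n+1) j = -(∑ t ∈ Finset.Ico j i, alA n t) from by
          rw [CBAux.tele n j i (le_of_lt hij'), neg_sub]]
        apply Submodule.neg_mem
        apply Submodule.sum_mem
        intro t ht
        obtain ⟨ht1, ht2⟩ := Finset.mem_Ico.mp ht
        exact halpha n t (by omega) (by omega) (by omega)
  · -- inner products match edge multiplicities
    intro x y hxy
    show |ip (β (cmi x + 1)) (β (cmi y + 1))| = ((B x y).natAbs : ℝ)
    have hx1 := hcmlt x
    have hy1 := hcmlt y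
    have hx2 := hcma_le x
    have hy2 := hcma_le y
    have hxy' : cmi x ≠ cmi y := fun h => hxy (hcmiinj h)
    rw [hβ x, hβ y, CBAux.ip_sub_sub,
      CBAux.ip_eVec (by omega) (by have := hcmi_lt x; omega),
      CBAux.ip_eVec (by omega) (by have := hcmi_lt x; omega),
      CBAux.ip_eVec (by omega) (by omega),
      CBAux.ip_eVec (by omega) (by omega)]
    by_cases hP1 : cmi x = cma y
    · have hB1 : (B x y).natAbs = 1 :=
        (h3 x y hxy).1 ((hsh_iff x y).mpr (Or.inr (Or.inl hP1)))
      rw [hB1, if_neg (by omega), if_pos (by omega), if_neg (by omega), if_neg (by omega)]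
      norm_num
    · by_cases hP2 : cma x = cmi y
      · have hB1 : (B x y).natAbs = 1 :=
          (h3 x y hxy).1 ((hsh_iff x y).mpr (Or.inr (Or.inr (Or.inl hP2))))
        rw [hB1, if_neg (by omega), if_neg (by omega), if_pos (by omega), if_neg (by omega)]
        norm_num
      · by_cases hP3 : cma x = cma y
        · have hB1 : (B x y).natAbs = 1 :=
            (h3 x y hxy).1 ((hsh_iff x y).mpr (Or.inr (Or.inr (Or.inr hP3))))
          rw [hB1, if_neg (by omega), if_neg (by omega), if_neg (by omega), if_pos (by omega)]
          norm_num
        · have hB0 : B x y = 0 := (h3 x y hxy).2 (fun hs => by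
            rcases (hsh_iff x y).mp hs with h | h | h | h
            exacts [hxy' h, hP1 h, hP2 h, hP3 h])
          rw [hB0, if_neg (by omega), if_neg (by omega), if_neg (by omega), if_neg (by omega)]
          norm_num
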